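/- arXiv:2502.14047 — 6 statements merged into one kernel-verified Lean document; each statement's English description precedes it below -/
import Mathlib

section
/- Let μ be a probability measure on X1 × X2 and let (x1^i, x2^i), i = 1,…,n, be i.i.d. samples from μ. Let K1 : X1 × X1 → ℝ and K2 : X2 × X2 → ℝ be measurable symmetric kernels with |K1| ≤ C1 and |K2| ≤ C2 pointwise, and set Â12 = (1/n²) Σ_{i,j=1}^n K1(x1^i, x1^j) K2(x2^i, x2^j). Then for every ε > 0, P( |Â12 − E[Â12]| ≥ ε ) ≤ 2·exp( − n·ε² / (32·C1²·C2²) ); equivalently, for every δ ∈ (0,1), with probability at least 1 − δ, |Â12 − E[Â12]| ≤ C1·C2·√((32/n)·log(2/δ)). -/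
open MeasureTheory
open scoped BigOperators

lemma abs_int_le {α : Type*} [MeasurableSpace α] {μ : Measure α} (f : α → ℝ) :
    |∫ a, f a ∂μ| ≤ ∫ a, |f a| ∂μ := by
  simpa [Real.norm_eq_abs] using norm_integral_le_integral_norm (μ := μ) f

/-- Bounded measurable functions are integrable on a finite measure. -/
lemma integrable_of_bdd' {Ω : Type*} [MeasurableSpace Ω] {μ : Measure Ω} [IsFiniteMeasure μ]
    {f : Ω → ℝ} (hm : Measurable f) {M : ℝ} (hb : ∀ x, |f x| ≤ M) : Integrable f μ :=
  (integrable_const M).mono' hm.aestronglyMeasurable (ae_of_all _ (by simpa using hb))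
lemma hoeff_step {Ω : Type*} [MeasurableSpace Ω] (μ : Measure Ω) [IsProbabilityMeasure μ]
    {h : Ω → ℝ} (hm : Measurable h) {c : ℝ} (hc : 0 ≤ c) (hb : ∀ ω, |h ω| ≤ c)
    (h0 : ∫ ω, h ω ∂μ = 0) (t : ℝ) :
    ∫ ω, Real.exp (t * h ω) ∂μ ≤ Real.exp (t ^ 2 * c ^ 2 / 2) := by
  rcases eq_or_lt_of_le hc with hc0 | hc0
  · have hz : ∀ ω, h ω = 0 := fun ω => abs_nonpos_iff.mp (hc0 ▸ hb ω)
    simp only [hz, mul_zero, Real.exp_zero]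
    have : (0:ℝ) ≤ t ^ 2 * c ^ 2 / 2 := by positivity
    simp [Real.one_le_exp_iff.mpr this]
  · have key : ∀ ω, Real.exp (t * h ω) ≤
        ((c - h ω) / (2 * c)) * Real.exp (-(t * c)) + ((c + h ω) / (2 * c)) * Real.exp (t * c) := by
      intro ω
      have h1 : -c ≤ h ω := neg_le_of_abs_le (hb ω)
      have h2 : h ω ≤ c := le_of_abs_le (hb ω)
      have w1 : (0:ℝ) ≤ (c - h ω) / (2 * c) := by
        apply div_nonneg <;> linarith
      have w2 : (0:ℝ) ≤ (c + h ω) / (2 * c) := by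
        apply div_nonneg <;> linarith
      have hsum : (c - h ω) / (2 * c) + (c + h ω) / (2 * c) = 1 := by
        field_simp; ring
      have := convexOn_exp.2 (Set.mem_univ (-(t * c))) (Set.mem_univ (t * c)) w1 w2 hsum
      simp only [smul_eq_mul] at this
      have harg : (c - h ω) / (2 * c) * (-(t * c)) + (c + h ω) / (2 * c) * (t * c) = t * h ω := by
        field_simp; ring
      rwa [harg] at this
    have hint : Integrable h μ := integrable_of_bdd' hm hb
    have i1 : Integrable (fun ω => (c - h ω) / (2 * c) * Real.exp (-(t * c))) μ :=
      ((((integrable_const c).sub hint).div_const _).mul_const _).congr (ae_of_all _ fun ω => rfl)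
    have i2 : Integrable (fun ω => (c + h ω) / (2 * c) * Real.exp (t * c)) μ :=
      ((((integrable_const c).add hint).div_const _).mul_const _).congr (ae_of_all _ fun ω => rfl)
    have hrhs : Integrable (fun ω => ((c - h ω) / (2 * c)) * Real.exp (-(t * c)) +
        ((c + h ω) / (2 * c)) * Real.exp (t * c)) μ := i1.add i2
    have I1 : ∫ ω, (c - h ω) ∂μ = c := by
      rw [integral_sub (integrable_const c) hint, h0, integral_const]; simp
    have I2 : ∫ ω, (c + h ω) ∂μ = c := by
      rw [integral_add (integrable_const c) hint, h0, integral_const]; simp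
    calc ∫ ω, Real.exp (t * h ω) ∂μ
        ≤ ∫ ω, (((c - h ω) / (2 * c)) * Real.exp (-(t * c)) +
            ((c + h ω) / (2 * c)) * Real.exp (t * c)) ∂μ :=
          integral_mono_of_nonneg (ae_of_all _ fun ω => (Real.exp_pos _).le) hrhs
            (ae_of_all _ key)
      _ = Real.cosh (t * c) := by
          rw [integral_add i1 i2, integral_mul_const, integral_mul_const,
            integral_div, integral_div, I1, I2, Real.cosh_eq]
          field_simp
          ring
      _ ≤ Real.exp ((t * c) ^ 2 / 2) := Real.cosh_le_exp_half_sq _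
      _ = Real.exp (t ^ 2 * c ^ 2 / 2) := by rw [mul_pow]

lemma mcdiarmid_mgf {Ω : Type*} [MeasurableSpace Ω] (μ : Measure Ω) [IsProbabilityMeasure μ]
    (c M : ℝ) (hc : 0 ≤ c) :
    ∀ (n : ℕ) (f : (Fin n → Ω) → ℝ), Measurable f → (∀ x, |f x| ≤ M) →
    (∀ (x y : Fin n → Ω) (i : Fin n), (∀ j, j ≠ i → x j = y j) → |f x - f y| ≤ c) →
    ∀ t : ℝ,
      ∫ x, Real.exp (t * (f x - ∫ x', f x' ∂(Measure.pi fun _ : Fin n => μ)))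
          ∂(Measure.pi fun _ : Fin n => μ)
        ≤ Real.exp ((n : ℝ) * t ^ 2 * c ^ 2 / 2) := by
  intro n
  induction n with
  | zero =>
    intro f hfm hfb hbd t
    have hconst : ∀ x : Fin 0 → Ω, f x = f (fun i => i.elim0) := by
      intro x; congr 1; funext j; exact j.elim0
    have hmean : ∫ x', f x' ∂(Measure.pi fun _ : Fin 0 => μ) = f (fun i => i.elim0) := by
      rw [show f = fun _ => f (fun i => i.elim0) from funext hconst, integral_const]
      simp [measure_univ]
    have h2 : ∀ x : Fin 0 → Ω, Real.exp (t * (f x -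
        ∫ x', f x' ∂(Measure.pi fun _ : Fin 0 => μ))) = 1 := by
      intro x; rw [hmean, hconst x]; simp
    rw [funext h2, integral_const]
    simp [measure_univ]
  | succ n ih =>
    intro f hfm hfb hbd t
    set Pn : Measure (Fin n → Ω) := Measure.pi fun _ : Fin n => μ with hPn
    set ν : Measure (Fin (n+1) → Ω) := Measure.pi fun _ : Fin (n+1) => μ with hν
    set m : ℝ := ∫ x, f x ∂ν with hm
    let e := MeasurableEquiv.piFinSuccAbove (fun _ : Fin (n+1) => Ω) 0
    have hmp : MeasurePreserving e ν (μ.prod Pn) :=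
      measurePreserving_piFinSuccAbove (fun _ : Fin (n+1) => μ) 0
    set F : Ω × (Fin n → Ω) → ℝ := fun p => f (e.symm p) with hF
    have hFm : Measurable F := hfm.comp e.symm.measurable
    have hFb : ∀ p, |F p| ≤ M := fun p => hfb _
    -- values of e.symm
    have hsymm : ∀ (a : Ω) (y : Fin n → Ω), e.symm (a, y) = Fin.cons a y := by
      intro a y
      funext j
      refine Fin.cases ?_ (fun k => ?_) j
      · simp [e, MeasurableEquiv.piFinSuccAbove, Fin.insertNthEquiv]
      · simp [e, MeasurableEquiv.piFinSuccAbove, Fin.insertNthEquiv]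
    -- g = conditional expectation given the tail
    set g : (Fin n → Ω) → ℝ := fun y => ∫ a, F (a, y) ∂μ with hg
    have hgm : Measurable g := hFm.stronglyMeasurable.integral_prod_left'.measurable
    have hFslice : ∀ y : Fin n → Ω, Measurable fun a => F (a, y) := fun y =>
      hFm.comp (measurable_id.prodMk measurable_const)
    have hgb : ∀ y, |g y| ≤ M := by
      intro y
      calc |g y| ≤ ∫ a, |F (a, y)| ∂μ := abs_int_le _
        _ ≤ ∫ _a, M ∂μ := by
            refine integral_mono_of_nonneg (ae_of_all _ fun a => abs_nonneg _)
              (integrable_const M) (ae_of_all _ fun a => hFb _)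
        _ = M := by simp [measure_univ]
    -- bounded differences for slices in the first variable
    have hslice_diff : ∀ (a b : Ω) (y : Fin n → Ω), |F (a, y) - F (b, y)| ≤ c := by
      intro a b y
      apply hbd _ _ (0 : Fin (n+1))
      intro j hj
      rw [hsymm, hsymm]
      cases j using Fin.cases with
      | zero => exact absurd rfl hj
      | succ k => simp
    -- bounded differences for g
    have hgd : ∀ (y y' : Fin n → Ω) (i : Fin n), (∀ j, j ≠ i → y j = y' j) →
        |g y - g y'| ≤ c := by
      intro y y' i hyy
      have hdi : ∀ a, |F (a, y) - F (a, y')| ≤ c := by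
        intro a
        apply hbd _ _ i.succ
        intro j hj
        rw [hsymm, hsymm]
        cases j using Fin.cases with
        | zero => simp
        | succ k =>
          simp only [Fin.cons_succ]
          exact hyy k (fun hk => hj (by rw [hk]))
      calc |g y - g y'| = |∫ a, (F (a, y) - F (a, y')) ∂μ| := by
            rw [integral_sub (integrable_of_bdd' (hFslice y) (fun a => hFb _))
              (integrable_of_bdd' (hFslice y') (fun a => hFb _))]
        _ ≤ ∫ a, |F (a, y) - F (a, y')| ∂μ := abs_int_le _
        _ ≤ ∫ _a, c ∂μ :=
            integral_mono_of_nonneg (ae_of_all _ fun a => abs_nonneg _)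
              (integrable_const c) (ae_of_all _ fun a => hdi a)
        _ = c := by simp [measure_univ]
    -- mean of g equals m
    have hFint : Integrable F (μ.prod Pn) := integrable_of_bdd' hFm hFb
    have hmean : ∫ y, g y ∂Pn = m := by
      rw [hm]
      have h1 : ∫ x, f x ∂ν = ∫ p, F p ∂(μ.prod Pn) := by
        rw [← hmp.integral_comp']
        simp only [hF, MeasurableEquiv.symm_apply_apply]
      rw [h1, integral_prod_symm F hFint]
    -- centered slice has zero mean and is bounded by c
    have hslice0 : ∀ y, ∫ a, (F (a, y) - g y) ∂μ = 0 := by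
      intro y
      rw [integral_sub (integrable_of_bdd' (hFslice y) (fun a => hFb _)) (integrable_const _),
        integral_const]
      simp [measure_univ, hg]
    have hsliceb : ∀ y a, |F (a, y) - g y| ≤ c := by
      intro y a
      have : F (a, y) - g y = ∫ b, (F (a, y) - F (b, y)) ∂μ := by
        rw [integral_sub (integrable_const _) (integrable_of_bdd' (hFslice y) (fun b => hFb _)),
          integral_const]
        simp [measure_univ, hg]
      rw [this]
      calc |∫ b, (F (a, y) - F (b, y)) ∂μ| ≤ ∫ b, |F (a, y) - F (b, y)| ∂μ :=
            abs_int_le _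
        _ ≤ ∫ _b, c ∂μ := integral_mono_of_nonneg (ae_of_all _ fun b => abs_nonneg _)
            (integrable_const c) (ae_of_all _ fun b => hslice_diff a b y)
        _ = c := by simp [measure_univ]
    have hexp_le : ∀ z : ℝ, |z| ≤ M →
        |Real.exp (t * (z - m))| ≤ Real.exp (|t| * (M + |m|)) := by
      intro z hz
      rw [abs_of_pos (Real.exp_pos _)]
      apply Real.exp_le_exp.mpr
      calc t * (z - m) ≤ |t * (z - m)| := le_abs_self _
        _ = |t| * |z - m| := abs_mul _ _
        _ ≤ |t| * (M + |m|) := by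
            refine mul_le_mul_of_nonneg_left ?_ (abs_nonneg t)
            exact (abs_sub z m).trans (add_le_add_left hz _)
    -- main computation
    have step1 : ∫ x, Real.exp (t * (f x - m)) ∂ν
        = ∫ y, ∫ a, Real.exp (t * (F (a, y) - m)) ∂μ ∂Pn := by
      have h1 : ∫ x, Real.exp (t * (f x - m)) ∂ν
          = ∫ p, Real.exp (t * (F p - m)) ∂(μ.prod Pn) := by
        rw [← hmp.integral_comp']
        simp only [hF, MeasurableEquiv.symm_apply_apply]
      rw [h1]
      exact integral_prod_symm _ (integrable_of_bdd'
        ((hFm.sub measurable_const).const_mul t).exp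
        (fun p => hexp_le (F p) (hFb p)))
    have inner_le : ∀ y, ∫ a, Real.exp (t * (F (a, y) - m)) ∂μ
        ≤ Real.exp (t ^ 2 * c ^ 2 / 2) * Real.exp (t * (g y - m)) := by
      intro y
      have hsplit : ∀ a, Real.exp (t * (F (a, y) - m))
          = Real.exp (t * (F (a, y) - g y)) * Real.exp (t * (g y - m)) := by
        intro a; rw [← Real.exp_add]; ring_nf
      calc ∫ a, Real.exp (t * (F (a, y) - m)) ∂μ
          = (∫ a, Real.exp (t * (F (a, y) - g y)) ∂μ) * Real.exp (t * (g y - m)) := by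
            simp_rw [hsplit]; rw [integral_mul_const]
        _ ≤ Real.exp (t ^ 2 * c ^ 2 / 2) * Real.exp (t * (g y - m)) := by
            refine mul_le_mul_of_nonneg_right ?_ (Real.exp_pos _).le
            exact hoeff_step μ ((hFslice y).sub measurable_const) hc (hsliceb y) (hslice0 y) t
    have hgexp_int : Integrable (fun y => Real.exp (t * (g y - m))) Pn :=
      integrable_of_bdd' ((hgm.sub measurable_const).const_mul t).exp
        (fun y => hexp_le (g y) (hgb y))
    calc ∫ x, Real.exp (t * (f x - m)) ∂ν
        = ∫ y, ∫ a, Real.exp (t * (F (a, y) - m)) ∂μ ∂Pn := step1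
      _ ≤ ∫ y, Real.exp (t ^ 2 * c ^ 2 / 2) * Real.exp (t * (g y - m)) ∂Pn :=
          integral_mono_of_nonneg
            (ae_of_all _ fun y => integral_nonneg fun a => (Real.exp_pos _).le)
            (hgexp_int.const_mul _) (ae_of_all _ inner_le)
      _ = Real.exp (t ^ 2 * c ^ 2 / 2) * ∫ y, Real.exp (t * (g y - m)) ∂Pn :=
          integral_const_mul _ _
      _ ≤ Real.exp (t ^ 2 * c ^ 2 / 2) * Real.exp ((n : ℝ) * t ^ 2 * c ^ 2 / 2) := by
          refine mul_le_mul_of_nonneg_left ?_ (Real.exp_pos _).le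
          have := ih g hgm hgb hgd t
          rwa [hmean] at this
      _ = Real.exp ((↑(n + 1) : ℝ) * t ^ 2 * c ^ 2 / 2) := by
          rw [← Real.exp_add]; push_cast; ring_nf

lemma chernoff_tail {Ω : Type*} [MeasurableSpace Ω] (P : Measure Ω) [IsProbabilityMeasure P]
    {f : Ω → ℝ} (hfm : Measurable f) {M : ℝ} (hfb : ∀ x, |f x| ≤ M) {m s : ℝ} (hs : 0 < s)
    (hmgf : ∀ t : ℝ, ∫ x, Real.exp (t * (f x - m)) ∂P ≤ Real.exp (t ^ 2 * s / 2))
    {ε : ℝ} (hε : 0 < ε) :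
    P {x | ε ≤ f x - m} ≤ ENNReal.ofReal (Real.exp (-(ε ^ 2) / (2 * s))) := by
  set t := ε / s with ht'
  have ht : 0 < t := div_pos hε hs
  have hsub : {x | ε ≤ f x - m} ⊆ {x | Real.exp (t * ε) ≤ Real.exp (t * (f x - m))} :=
    fun x hx => Real.exp_le_exp.mpr (mul_le_mul_of_nonneg_left hx ht.le)
  have hexp_le : ∀ z : ℝ, |z| ≤ M →
      |Real.exp (t * (z - m))| ≤ Real.exp (|t| * (M + |m|)) := by
    intro z hz
    rw [abs_of_pos (Real.exp_pos _)]
    apply Real.exp_le_exp.mpr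
    calc t * (z - m) ≤ |t * (z - m)| := le_abs_self _
      _ = |t| * |z - m| := abs_mul _ _
      _ ≤ |t| * (M + |m|) := mul_le_mul_of_nonneg_left
          ((abs_sub z m).trans (add_le_add_left hz _)) (abs_nonneg t)
  have hint : Integrable (fun x => Real.exp (t * (f x - m))) P :=
    integrable_of_bdd' ((hfm.sub measurable_const).const_mul t).exp
      (fun x => hexp_le (f x) (hfb x))
  have hmark := mul_meas_ge_le_integral_of_nonneg
    (ae_of_all _ fun x => (Real.exp_pos (t * (f x - m))).le) hint (Real.exp (t * ε))
  have hkey : (P {x | Real.exp (t * ε) ≤ Real.exp (t * (f x - m))}).toReal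
      ≤ Real.exp (-(ε ^ 2) / (2 * s)) := by
    have h2 : Real.exp (t * ε) * (P {x | Real.exp (t * ε) ≤ Real.exp (t * (f x - m))}).toReal
        ≤ Real.exp (t ^ 2 * s / 2) := hmark.trans (hmgf t)
    have h3 : (P {x | Real.exp (t * ε) ≤ Real.exp (t * (f x - m))}).toReal
        ≤ Real.exp (t ^ 2 * s / 2) / Real.exp (t * ε) :=
      (le_div_iff₀ (Real.exp_pos _)).mpr (by linarith [h2])
    refine h3.trans ?_
    rw [← Real.exp_sub]
    apply Real.exp_le_exp.mpr
    have : t ^ 2 * s / 2 - t * ε = -(ε ^ 2) / (2 * s) := by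
      rw [ht']; field_simp; ring
    rw [this]

  calc P {x | ε ≤ f x - m} ≤ P {x | Real.exp (t * ε) ≤ Real.exp (t * (f x - m))} :=
        measure_mono hsub
    _ = ENNReal.ofReal ((P {x | Real.exp (t * ε) ≤ Real.exp (t * (f x - m))}).toReal) :=
        (ENNReal.ofReal_toReal (measure_ne_top P _)).symm
    _ ≤ ENNReal.ofReal (Real.exp (-(ε ^ 2) / (2 * s))) := ENNReal.ofReal_le_ofReal hkey

lemma chernoff_two {Ω : Type*} [MeasurableSpace Ω] (P : Measure Ω) [IsProbabilityMeasure P]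
    {f : Ω → ℝ} (hfm : Measurable f) {M : ℝ} (hfb : ∀ x, |f x| ≤ M) {m s : ℝ} (hs : 0 < s)
    (hmgf : ∀ t : ℝ, ∫ x, Real.exp (t * (f x - m)) ∂P ≤ Real.exp (t ^ 2 * s / 2))
    {ε : ℝ} (hε : 0 < ε) :
    P {x | ε ≤ |f x - m|} ≤ ENNReal.ofReal (2 * Real.exp (-(ε ^ 2) / (2 * s))) := by
  have hneg : ∀ t : ℝ, ∫ x, Real.exp (t * ((fun x => -f x) x - -m)) ∂P
      ≤ Real.exp (t ^ 2 * s / 2) := by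
    intro t
    calc ∫ x, Real.exp (t * ((fun x => -f x) x - -m)) ∂P
        = ∫ x, Real.exp ((-t) * (f x - m)) ∂P := by
          congr 1; funext x; congr 1; ring
      _ ≤ Real.exp ((-t) ^ 2 * s / 2) := hmgf (-t)
      _ = Real.exp (t ^ 2 * s / 2) := by ring_nf
  have h1 := chernoff_tail P hfm hfb hs hmgf hε
  have h2 := chernoff_tail P hfm.neg (M := M) (fun x => by simpa using hfb x) hs hneg hε
  have hsub : {x | ε ≤ |f x - m|} ⊆
      {x | ε ≤ f x - m} ∪ {x | ε ≤ (fun x => -f x) x - -m} := by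
    intro x hx
    rcases le_abs.mp (Set.mem_setOf_eq ▸ hx) with h | h
    · exact Or.inl h
    · exact Or.inr (by simp only [Set.mem_setOf_eq]; linarith)
  calc P {x | ε ≤ |f x - m|}
      ≤ P ({x | ε ≤ f x - m} ∪ {x | ε ≤ (fun x => -f x) x - -m}) := measure_mono hsub
    _ ≤ P {x | ε ≤ f x - m} + P {x | ε ≤ (fun x => -f x) x - -m} := measure_union_le _ _
    _ ≤ ENNReal.ofReal (Real.exp (-(ε ^ 2) / (2 * s)))
        + ENNReal.ofReal (Real.exp (-(ε ^ 2) / (2 * s))) := add_le_add h1 h2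
    _ = ENNReal.ofReal (2 * Real.exp (-(ε ^ 2) / (2 * s))) := by
        rw [← ENNReal.ofReal_add (Real.exp_pos _).le (Real.exp_pos _).le, two_mul]
        ring_nf

lemma double_sum_diff_bound {n : ℕ} (T T' : Fin n → Fin n → ℝ) (C : ℝ) (hC : 0 ≤ C)
    (hb : ∀ p q, |T p q - T' p q| ≤ 2 * C) (i : Fin n)
    (h0 : ∀ p q, p ≠ i → q ≠ i → T p q = T' p q) :
    |(∑ p : Fin n, ∑ q : Fin n, T p q) - ∑ p : Fin n, ∑ q : Fin n, T' p q| ≤ 4 * C * n := by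
  have key : (∑ p : Fin n, ∑ q : Fin n, T p q) - ∑ p : Fin n, ∑ q : Fin n, T' p q
      = ∑ p : Fin n, ∑ q : Fin n, (T p q - T' p q) := by
    rw [← Finset.sum_sub_distrib]
    exact Finset.sum_congr rfl fun p _ => (Finset.sum_sub_distrib _ _).symm
  rw [key]
  have h1 : |∑ p : Fin n, ∑ q : Fin n, (T p q - T' p q)|
      ≤ ∑ p : Fin n, |∑ q : Fin n, (T p q - T' p q)| := Finset.abs_sum_le_sum_abs _ _
  refine h1.trans ?_
  have hrow : ∀ p : Fin n, p ≠ i → |∑ q : Fin n, (T p q - T' p q)| ≤ 2 * C := by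
    intro p hp
    rw [Finset.sum_eq_single i (fun q _ hq => by rw [h0 p q hp hq, sub_self]) (by simp)]
    exact hb p i
  have hrowi : |∑ q : Fin n, (T i q - T' i q)| ≤ 2 * C * n := by
    refine (Finset.abs_sum_le_sum_abs _ _).trans ?_
    calc ∑ q : Fin n, |T i q - T' i q| ≤ ∑ _q : Fin n, 2 * C :=
          Finset.sum_le_sum fun q _ => hb i q
      _ = 2 * C * n := by simp [Finset.sum_const, Finset.card_univ, mul_comm]
  rw [← Finset.add_sum_erase _ _ (Finset.mem_univ i)]
  have h2 : ∑ p ∈ Finset.univ.erase i, |∑ q : Fin n, (T p q - T' p q)|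
      ≤ ∑ _p ∈ Finset.univ.erase i, 2 * C :=
    Finset.sum_le_sum fun p hp => hrow p (Finset.ne_of_mem_erase hp)
  have h3 : (∑ _p ∈ Finset.univ.erase i, (2 * C : ℝ)) ≤ 2 * C * n := by
    rw [Finset.sum_const]
    have : (Finset.univ.erase i).card ≤ n := by
      simpa using (Finset.card_erase_le).trans (by simp)
    rw [nsmul_eq_mul]
    calc ((Finset.univ.erase i).card : ℝ) * (2 * C) ≤ (n : ℝ) * (2 * C) := by
          refine mul_le_mul_of_nonneg_right ?_ (by positivity)
          exact_mod_cast this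
      _ = 2 * C * n := by ring
  have := add_le_add hrowi (h2.trans h3)
  linarith

/-- McDiarmid-type concentration of the empirical kernel alignment
`Â₁₂` of two bounded kernels around its expectation, for an i.i.d. sample of size `n`
from a joint probability measure `μ` on `X1 × X2` (modelled by the product measure
`Measure.pi (fun _ : Fin n => μ)`). Both the `ε`-form and the equivalent `δ`-form are
stated. -/
theorem empirical_kernel_alignment_concentration
    {X1 X2 : Type*} [MeasurableSpace X1] [MeasurableSpace X2]
    (μ : Measure (X1 × X2)) [IsProbabilityMeasure μ]
    (K1 : X1 → X1 → ℝ) (K2 : X2 → X2 → ℝ)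
    (hK1m : Measurable (Function.uncurry K1)) (hK2m : Measurable (Function.uncurry K2))
    (hK1s : ∀ a b, K1 a b = K1 b a) (hK2s : ∀ a b, K2 a b = K2 b a)
    (C1 C2 : ℝ) (hC1 : ∀ a b, |K1 a b| ≤ C1) (hC2 : ∀ a b, |K2 a b| ≤ C2)
    (n : ℕ) (A : (Fin n → X1 × X2) → ℝ)
    (hA : ∀ x, A x = (1 / (n : ℝ) ^ 2) * ∑ i : Fin n, ∑ j : Fin n,
        K1 (x i).1 (x j).1 * K2 (x i).2 (x j).2) :
    (∀ ε : ℝ, 0 < ε →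
      (Measure.pi fun _ : Fin n => μ)
          {x | ε ≤ |A x - ∫ x', A x' ∂(Measure.pi fun _ : Fin n => μ)|}
        ≤ ENNReal.ofReal (2 * Real.exp (-((n : ℝ) * ε ^ 2) / (32 * C1 ^ 2 * C2 ^ 2)))) ∧
    (∀ δ : ℝ, 0 < δ → δ < 1 →
      (Measure.pi fun _ : Fin n => μ)
          {x | C1 * C2 * Real.sqrt ((32 / (n : ℝ)) * Real.log (2 / δ))
              < |A x - ∫ x', A x' ∂(Measure.pi fun _ : Fin n => μ)|}
        ≤ ENNReal.ofReal δ) := by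
  classical
  set P : Measure (Fin n → X1 × X2) := Measure.pi fun _ : Fin n => μ with hP
  set m : ℝ := ∫ x', A x' ∂P with hm
  -- nonemptiness of the sample space
  have hne : Nonempty (X1 × X2) := by
    by_contra h
    rw [not_nonempty_iff] at h
    exact (IsProbabilityMeasure.ne_zero μ) (μ.eq_zero_of_isEmpty)
  obtain ⟨z⟩ := hne
  have hC1n : 0 ≤ C1 := (abs_nonneg _).trans (hC1 z.1 z.1)
  have hC2n : 0 ≤ C2 := (abs_nonneg _).trans (hC2 z.2 z.2)
  by_cases hdeg : ∀ x, A x = 0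
  · -- degenerate case : A is identically zero
    have hm0 : m = 0 := by
      rw [hm, show A = fun _ => (0 : ℝ) from funext hdeg]
      simp
    constructor
    · intro ε hε
      have hset : {x | ε ≤ |A x - m|} = ∅ := by
        apply Set.eq_empty_iff_forall_notMem.mpr
        intro x hx
        simp only [Set.mem_setOf_eq, hdeg x, hm0, sub_zero, abs_zero] at hx
        linarith
      rw [hset]
      simp
    · intro δ hδ0 hδ1
      have hBn : 0 ≤ C1 * C2 * Real.sqrt ((32 / (n : ℝ)) * Real.log (2 / δ)) :=
        mul_nonneg (mul_nonneg hC1n hC2n) (Real.sqrt_nonneg _)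
      have hset : {x | C1 * C2 * Real.sqrt ((32 / (n : ℝ)) * Real.log (2 / δ))
          < |A x - m|} = ∅ := by
        apply Set.eq_empty_iff_forall_notMem.mpr
        intro x hx
        simp only [Set.mem_setOf_eq, hdeg x, hm0, sub_zero, abs_zero] at hx
        linarith
      rw [hset]
      simp
  · -- nondegenerate case
    have hn : 0 < n := by
      rcases Nat.eq_zero_or_pos n with h0 | h
      · subst h0
        exact absurd (fun x => by rw [hA x]; simp) hdeg
      · exact h
    have npos : (0 : ℝ) < n := Nat.cast_pos.mpr hn
    have hC1p : 0 < C1 := by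
      rcases hC1n.lt_or_eq with h | h
      · exact h
      · refine absurd (fun x => ?_) hdeg
        rw [hA x]
        have : ∀ i j : Fin n, K1 (x i).1 (x j).1 * K2 (x i).2 (x j).2 = 0 := by
          intro i j
          have : K1 (x i).1 (x j).1 = 0 := abs_nonpos_iff.mp (h ▸ hC1 _ _)
          rw [this, zero_mul]
        simp [this]
    have hC2p : 0 < C2 := by
      rcases hC2n.lt_or_eq with h | h
      · exact h
      · refine absurd (fun x => ?_) hdeg
        rw [hA x]
        have : ∀ i j : Fin n, K1 (x i).1 (x j).1 * K2 (x i).2 (x j).2 = 0 := by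
          intro i j
          have : K2 (x i).2 (x j).2 = 0 := abs_nonpos_iff.mp (h ▸ hC2 _ _)
          rw [this, mul_zero]
        simp [this]
    set C : ℝ := C1 * C2 with hC
    have hCp : 0 < C := mul_pos hC1p hC2p
    set c : ℝ := 4 * C / n with hc'
    have hcp : 0 < c := by positivity
    have hTb : ∀ (a b : X1) (u v : X2), |K1 a b * K2 u v| ≤ C := by
      intro a b u v
      rw [abs_mul, hC]
      exact mul_le_mul (hC1 a b) (hC2 u v) (abs_nonneg _) hC1n
    -- measurability of A
    have hAm : Measurable A := by
      rw [show A = fun x => (1 / (n : ℝ) ^ 2) * ∑ i : Fin n, ∑ j : Fin n,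
          K1 (x i).1 (x j).1 * K2 (x i).2 (x j).2 from funext hA]
      refine Measurable.const_mul ?_ _
      refine Finset.measurable_sum _ fun i _ => Finset.measurable_sum _ fun j _ => ?_
      exact (hK1m.comp (((measurable_pi_apply i).fst).prodMk
          ((measurable_pi_apply j).fst))).mul
        (hK2m.comp (((measurable_pi_apply i).snd).prodMk ((measurable_pi_apply j).snd)))
    -- boundedness of A
    have hAb : ∀ x, |A x| ≤ C := by
      intro x
      rw [hA x, abs_mul, abs_of_nonneg (by positivity : (0:ℝ) ≤ 1 / (n : ℝ) ^ 2)]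
      have h1 : |∑ i : Fin n, ∑ j : Fin n, K1 (x i).1 (x j).1 * K2 (x i).2 (x j).2|
          ≤ (n : ℝ) ^ 2 * C := by
        refine (Finset.abs_sum_le_sum_abs _ _).trans ?_
        calc ∑ i : Fin n, |∑ j : Fin n, K1 (x i).1 (x j).1 * K2 (x i).2 (x j).2|
            ≤ ∑ i : Fin n, ∑ j : Fin n, |K1 (x i).1 (x j).1 * K2 (x i).2 (x j).2| :=
              Finset.sum_le_sum fun i _ => Finset.abs_sum_le_sum_abs _ _
          _ ≤ ∑ _i : Fin n, ∑ _j : Fin n, C :=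
              Finset.sum_le_sum fun i _ => Finset.sum_le_sum fun j _ => hTb _ _ _ _
          _ = (n : ℝ) ^ 2 * C := by
              simp [Finset.sum_const, Finset.card_univ]
              ring
      calc 1 / (n : ℝ) ^ 2 * |∑ i : Fin n, ∑ j : Fin n,
            K1 (x i).1 (x j).1 * K2 (x i).2 (x j).2|
          ≤ 1 / (n : ℝ) ^ 2 * ((n : ℝ) ^ 2 * C) := by
            exact mul_le_mul_of_nonneg_left h1 (by positivity)
        _ = C := by field_simp
    -- bounded differences of A
    have hAd : ∀ (x y : Fin n → X1 × X2) (i : Fin n),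
        (∀ j, j ≠ i → x j = y j) → |A x - A y| ≤ c := by
      intro x y i hxy
      have key := double_sum_diff_bound
        (fun p q => K1 (x p).1 (x q).1 * K2 (x p).2 (x q).2)
        (fun p q => K1 (y p).1 (y q).1 * K2 (y p).2 (y q).2) C hCp.le
        (fun p q => (abs_sub _ _).trans (by
          have h1 := hTb (x p).1 (x q).1 (x p).2 (x q).2
          have h2 := hTb (y p).1 (y q).1 (y p).2 (y q).2
          linarith))
        i
        (fun p q hp hq => by simp only [hxy p hp, hxy q hq])
      rw [hA x, hA y, ← mul_sub, abs_mul,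
        abs_of_nonneg (by positivity : (0:ℝ) ≤ 1 / (n : ℝ) ^ 2)]
      calc 1 / (n : ℝ) ^ 2 * |(∑ p : Fin n, ∑ q : Fin n,
              K1 (x p).1 (x q).1 * K2 (x p).2 (x q).2)
            - ∑ p : Fin n, ∑ q : Fin n, K1 (y p).1 (y q).1 * K2 (y p).2 (y q).2|
          ≤ 1 / (n : ℝ) ^ 2 * (4 * C * n) :=
            mul_le_mul_of_nonneg_left key (by positivity)
        _ = c := by rw [hc']; field_simp
    -- mgf bound
    have hmgf : ∀ t : ℝ, ∫ x, Real.exp (t * (A x - m)) ∂P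
        ≤ Real.exp (t ^ 2 * ((n : ℝ) * c ^ 2) / 2) := by
      intro t
      have h := mcdiarmid_mgf μ c C hcp.le n A hAm hAb hAd t
      refine h.trans_eq ?_
      congr 1
      ring
    have hs : 0 < (n : ℝ) * c ^ 2 := by positivity
    have part1 : ∀ ε : ℝ, 0 < ε → P {x | ε ≤ |A x - m|}
        ≤ ENNReal.ofReal (2 * Real.exp (-((n : ℝ) * ε ^ 2) / (32 * C1 ^ 2 * C2 ^ 2))) := by
      intro ε hε
      have h := chernoff_two P hAm hAb hs hmgf hε
      refine h.trans_eq ?_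
      congr 2
      rw [hc', hC]
      field_simp
      ring
    refine ⟨part1, ?_⟩
    intro δ hδ0 hδ1
    have hlog : 0 < Real.log (2 / δ) := Real.log_pos (by rw [lt_div_iff₀ hδ0]; linarith)
    have harg : 0 < (32 / (n : ℝ)) * Real.log (2 / δ) := mul_pos (by positivity) hlog
    have hεp : 0 < C1 * C2 * Real.sqrt ((32 / (n : ℝ)) * Real.log (2 / δ)) :=
      mul_pos (mul_pos hC1p hC2p) (Real.sqrt_pos.mpr harg)
    set ε : ℝ := C1 * C2 * Real.sqrt ((32 / (n : ℝ)) * Real.log (2 / δ)) with hεdef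
    calc P {x | ε < |A x - m|} ≤ P {x | ε ≤ |A x - m|} :=
          measure_mono (fun x hx => le_of_lt (Set.mem_setOf_eq ▸ hx))
      _ ≤ ENNReal.ofReal (2 * Real.exp (-((n : ℝ) * ε ^ 2) / (32 * C1 ^ 2 * C2 ^ 2))) :=
          part1 ε hεp
      _ = ENNReal.ofReal δ := by
          have hε2 : ε ^ 2 = C1 ^ 2 * C2 ^ 2 * ((32 / (n : ℝ)) * Real.log (2 / δ)) := by
            rw [hεdef, mul_pow, mul_pow, Real.sq_sqrt harg.le]
          have hexp : -((n : ℝ) * ε ^ 2) / (32 * C1 ^ 2 * C2 ^ 2) = -Real.log (2 / δ) := by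
            rw [hε2]; field_simp
          rw [hexp, Real.exp_neg, Real.exp_log (by positivity), inv_div]
          congr 1
          ring
end

section
/- Let μ be a probability measure on X1 × X2 and let f1 : X1 → ℝ^{d1}, f2 : X2 → ℝ^{d2} be measurable with E_μ‖f1(x1)‖² < ∞ and E_μ‖f2(x2)‖² < ∞. Define kernels K_q(x, x') = ⟨f_q(x_q), f_q(x_q')⟩ on the joint space, and covariance matrices Σ_{p,q} = E_μ[f_p(x_p) f_q(x_q)^T]. Then ∫∫ K1(x, x') K2(x, x') dμ(x) dμ(x') = ‖Σ_{1,2}‖_F²; consequently, if Σ_{1,1} ≠ 0 and Σ_{2,2} ≠ 0, the population kernel alignment satisfies A(K1, K2) := ∫∫ K1 K2 dμ⊗dμ / √( ∫∫ K1² dμ⊗dμ · ∫∫ K2² dμ⊗dμ ) = ‖Σ_{1,2}‖_F² / (‖Σ_{1,1}‖_F · ‖Σ_{2,2}‖_F). -/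
open MeasureTheory
open scoped BigOperators

/-- Frobenius inner product of two real matrices. -/
def frobInner {m n : Type*} [Fintype m] [Fintype n] (A B : Matrix m n ℝ) : ℝ :=
  ∑ i, ∑ j, A i j * B i j

/-- Frobenius norm of a real matrix. -/
noncomputable def frobNorm {m n : Type*} [Fintype m] [Fintype n] (A : Matrix m n ℝ) : ℝ :=
  Real.sqrt (frobInner A A)

lemma key_double_integral {X : Type*} [MeasurableSpace X] (μ : Measure X)
    [IsProbabilityMeasure μ] {m n : ℕ} (g : X → Fin m → ℝ) (h : X → Fin n → ℝ)
    (hg : Measurable g) (hh : Measurable h)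
    (hgL : Integrable (fun x => ∑ a, g x a ^ 2) μ)
    (hhL : Integrable (fun x => ∑ b, h x b ^ 2) μ) :
    (∫ x, ∫ x', (∑ a, g x a * g x' a) * (∑ b, h x b * h x' b) ∂μ ∂μ)
      = ∑ a, ∑ b, (∫ x, g x a * h x b ∂μ) ^ 2 := by
  have hga : ∀ a, Integrable (fun x => g x a ^ 2) μ := by
    intro a
    refine hgL.mono' ((((measurable_pi_apply a).comp hg).pow_const 2).aestronglyMeasurable) ?_
    filter_upwards with x
    rw [Real.norm_eq_abs, abs_of_nonneg (sq_nonneg _)]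
    exact Finset.single_le_sum (fun i _ => sq_nonneg (g x i)) (Finset.mem_univ a)
  have hhb : ∀ b, Integrable (fun x => h x b ^ 2) μ := by
    intro b
    refine hhL.mono' ((((measurable_pi_apply b).comp hh).pow_const 2).aestronglyMeasurable) ?_
    filter_upwards with x
    rw [Real.norm_eq_abs, abs_of_nonneg (sq_nonneg _)]
    exact Finset.single_le_sum (fun i _ => sq_nonneg (h x i)) (Finset.mem_univ b)
  have hgh : ∀ a b, Integrable (fun x => g x a * h x b) μ := by
    intro a b
    refine ((hga a).add (hhb b)).mono'
      ((((measurable_pi_apply a).comp hg).mul ((measurable_pi_apply b).comp hh)).aestronglyMeasurable) ?_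
    filter_upwards with x
    rw [Real.norm_eq_abs, abs_mul]; simp only [Pi.add_apply]
    nlinarith [sq_nonneg (|g x a| - |h x b|), sq_abs (g x a), sq_abs (h x b), abs_nonneg (g x a), abs_nonneg (h x b)]
  set I : Fin m → Fin n → ℝ := fun a b => ∫ x, g x a * h x b ∂μ with hI
  have inner : ∀ x, (∫ x', (∑ a, g x a * g x' a) * (∑ b, h x b * h x' b) ∂μ)
      = ∑ a, ∑ b, (g x a * h x b) * I a b := by
    intro x
    have : (fun x' => (∑ a, g x a * g x' a) * (∑ b, h x b * h x' b))
        = fun x' => ∑ a, ∑ b, (g x a * h x b) * (g x' a * h x' b) := by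
      funext x'
      rw [Finset.sum_mul_sum]
      congr 1; funext a; congr 1; funext b; ring
    rw [this]
    rw [integral_finset_sum _ (fun a _ => integrable_finset_sum _
      (fun b _ => ((hgh a b).const_mul _)))]
    refine Finset.sum_congr rfl fun a _ => ?_
    rw [integral_finset_sum _ (fun b _ => ((hgh a b).const_mul _))]
    exact Finset.sum_congr rfl fun b _ => integral_const_mul _ _
  simp_rw [inner]
  rw [integral_finset_sum _ (fun a _ => integrable_finset_sum _
    (fun b _ => ((hgh a b).mul_const _)))]
  refine Finset.sum_congr rfl fun a _ => ?_
  rw [integral_finset_sum _ (fun b _ => ((hgh a b).mul_const _))]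
  refine Finset.sum_congr rfl fun b _ => ?_
  rw [integral_mul_const, sq]

/-- Population kernel alignment of linear-feature kernels
`K_q(x,x') = ⟨f_q(x_q), f_q(x_q')⟩`: the double integral `∫∫ K1 K2 dμ⊗dμ` equals
`‖Σ₁₂‖_F²`, and consequently `A(K1,K2) = ‖Σ₁₂‖_F² / (‖Σ₁₁‖_F ‖Σ₂₂‖_F)` when
`Σ₁₁ ≠ 0` and `Σ₂₂ ≠ 0`. -/
theorem population_kernel_alignment_representation
    {X1 X2 : Type*} [MeasurableSpace X1] [MeasurableSpace X2] {d1 d2 : ℕ}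
    (μ : Measure (X1 × X2)) [IsProbabilityMeasure μ]
    (f1 : X1 → Fin d1 → ℝ) (f2 : X2 → Fin d2 → ℝ)
    (hf1 : Measurable f1) (hf2 : Measurable f2)
    (hf1L2 : Integrable (fun x => ∑ a, (f1 x.1 a) ^ 2) μ)
    (hf2L2 : Integrable (fun x => ∑ b, (f2 x.2 b) ^ 2) μ)
    (S11 : Matrix (Fin d1) (Fin d1) ℝ) (S12 : Matrix (Fin d1) (Fin d2) ℝ)
    (S22 : Matrix (Fin d2) (Fin d2) ℝ)
    (hS11 : ∀ a b, S11 a b = ∫ x, f1 x.1 a * f1 x.1 b ∂μ)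
    (hS12 : ∀ a b, S12 a b = ∫ x, f1 x.1 a * f2 x.2 b ∂μ)
    (hS22 : ∀ a b, S22 a b = ∫ x, f2 x.2 a * f2 x.2 b ∂μ) :
    (∫ x, ∫ x', (∑ a, f1 x.1 a * f1 x'.1 a) * (∑ b, f2 x.2 b * f2 x'.2 b) ∂μ ∂μ)
      = frobInner S12 S12 ∧
    (S11 ≠ 0 → S22 ≠ 0 →
      (∫ x, ∫ x', (∑ a, f1 x.1 a * f1 x'.1 a) * (∑ b, f2 x.2 b * f2 x'.2 b) ∂μ ∂μ) /
        Real.sqrt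
          ((∫ x, ∫ x', (∑ a, f1 x.1 a * f1 x'.1 a) ^ 2 ∂μ ∂μ) *
            (∫ x, ∫ x', (∑ b, f2 x.2 b * f2 x'.2 b) ^ 2 ∂μ ∂μ))
        = frobInner S12 S12 / (frobNorm S11 * frobNorm S22)) := by
  have hm1 : Measurable (fun x : X1 × X2 => f1 x.1) := hf1.comp measurable_fst
  have hm2 : Measurable (fun x : X1 × X2 => f2 x.2) := hf2.comp measurable_snd
  have h12 := key_double_integral μ (fun x => f1 x.1) (fun x => f2 x.2) hm1 hm2 hf1L2 hf2L2
  have h11 := key_double_integral μ (fun x => f1 x.1) (fun x => f1 x.1) hm1 hm1 hf1L2 hf1L2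
  have h22 := key_double_integral μ (fun x => f2 x.2) (fun x => f2 x.2) hm2 hm2 hf2L2 hf2L2
  have e12 : (∫ x, ∫ x', (∑ a, f1 x.1 a * f1 x'.1 a) * (∑ b, f2 x.2 b * f2 x'.2 b) ∂μ ∂μ)
      = frobInner S12 S12 := by
    rw [h12]; simp [frobInner, hS12, sq]
  have e11 : (∫ x, ∫ x', (∑ a, f1 x.1 a * f1 x'.1 a) ^ 2 ∂μ ∂μ) = frobInner S11 S11 := by
    simp_rw [sq]; rw [h11]; simp [frobInner, hS11, sq]
  have e22 : (∫ x, ∫ x', (∑ b, f2 x.2 b * f2 x'.2 b) ^ 2 ∂μ ∂μ) = frobInner S22 S22 := by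
    simp_rw [sq]; rw [h22]; simp [frobInner, hS22, sq]
  refine ⟨e12, fun _ _ => ?_⟩
  have h11n : 0 ≤ frobInner S11 S11 :=
    Finset.sum_nonneg fun a _ => Finset.sum_nonneg fun b _ => mul_self_nonneg _
  rw [e12, e11, e22, Real.sqrt_mul h11n, frobNorm, frobNorm]
end

section
/- Let μ be a probability measure on X1 × X2 with marginals μ1, μ2 under the coordinate projections. For q = 1,2 let φ_{q,1},…,φ_{q,m_q} ∈ L²(μ_q) be orthonormal and let η_{q,1},…,η_{q,m_q} ≥ 0 be not all zero. Define kernels K_q(x, x') = Σ_i η_{q,i} φ_{q,i}(x_q) φ_{q,i}(x_q') on the joint space and let c_{ij} = E_μ[ φ_{1,i}(x1) φ_{2,j}(x2) ]. Then the population kernel alignment satisfies A(K1, K2) = ( Σ_{i,j} η_{1,i} η_{2,j} c_{ij}² ) / √( Σ_i η_{1,i}² · Σ_j η_{2,j}² ); equivalently, A(K1, K2) = ⟨ η̂1, (C ⊙ C) η̂2 ⟩ where C = (c_{ij}), ⊙ is the Hadamard (entrywise) product, and η̂_q = η_q / ‖η_q‖ is the ℓ²-normalized eigenvalue vector. -/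
open MeasureTheory
open scoped BigOperators

lemma aux_double_integral {Y : Type*} [MeasurableSpace Y] (μ : Measure Y)
    {m1 m2 : ℕ} (f : Fin m1 → Y → ℝ) (g : Fin m2 → Y → ℝ)
    (a : Fin m1 → ℝ) (b : Fin m2 → ℝ)
    (hint : ∀ i j, Integrable (fun y => f i y * g j y) μ) :
    (∫ x, ∫ x', (∑ i, a i * f i x * f i x') * (∑ j, b j * g j x * g j x') ∂μ ∂μ)
      = ∑ i, ∑ j, a i * b j * (∫ y, f i y * g j y ∂μ) ^ 2 := by
  have h1 : ∀ x : Y, (∫ x', (∑ i, a i * f i x * f i x') * (∑ j, b j * g j x * g j x') ∂μ)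
      = ∑ i, ∑ j, (a i * b j * (∫ y, f i y * g j y ∂μ)) * (f i x * g j x) := by
    intro x
    have he : (fun x' => (∑ i, a i * f i x * f i x') * (∑ j, b j * g j x * g j x'))
        = fun x' => ∑ i, ∑ j, (a i * b j * (f i x * g j x)) * (f i x' * g j x') := by
      funext x'
      rw [Finset.sum_mul_sum]
      refine Finset.sum_congr rfl fun i _ => Finset.sum_congr rfl fun j _ => ?_
      ring
    rw [he, integral_finset_sum]
    · refine Finset.sum_congr rfl fun i _ => ?_
      rw [integral_finset_sum]
      · refine Finset.sum_congr rfl fun j _ => ?_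
        rw [MeasureTheory.integral_const_mul]; ring
      · exact fun j _ => (hint i j).const_mul _
    · exact fun i _ => integrable_finset_sum _ fun j _ => (hint i j).const_mul _
  simp only [h1]
  rw [integral_finset_sum]
  · refine Finset.sum_congr rfl fun i _ => ?_
    rw [integral_finset_sum]
    · refine Finset.sum_congr rfl fun j _ => ?_
      rw [MeasureTheory.integral_const_mul]; ring
    · exact fun j _ => (hint i j).const_mul _
  · exact fun i _ => integrable_finset_sum _ fun j _ => (hint i j).const_mul _

/-- Spectral interpretation of the population kernel alignment of two
kernels `K_q = ∑ η_{q,i} φ_{q,i} ⊗ φ_{q,i}` acting through the coordinate projections: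
`A(K1,K2) = (∑_{i,j} η_{1,i} η_{2,j} c_{ij}²) / √(∑ η_{1,i}² ∑ η_{2,j}²)`, and
equivalently `A(K1,K2) = ⟨η̂₁, (C ⊙ C) η̂₂⟩` with `c_{ij} = E_μ[φ_{1,i}(x1) φ_{2,j}(x2)]`
and `η̂_q = η_q / ‖η_q‖`. -/
theorem population_kernel_alignment_spectral
    {X1 X2 : Type*} [MeasurableSpace X1] [MeasurableSpace X2] {m1 m2 : ℕ}
    (μ : Measure (X1 × X2)) [IsProbabilityMeasure μ]
    (φ1 : Fin m1 → X1 → ℝ) (φ2 : Fin m2 → X2 → ℝ)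
    (hφ1m : ∀ i, Measurable (φ1 i)) (hφ2m : ∀ i, Measurable (φ2 i))
    (horth1 : ∀ i j, (∫ x, φ1 i x.1 * φ1 j x.1 ∂μ) = if i = j then 1 else 0)
    (horth2 : ∀ i j, (∫ x, φ2 i x.2 * φ2 j x.2 ∂μ) = if i = j then 1 else 0)
    (hint1 : ∀ i j, Integrable (fun x => φ1 i x.1 * φ1 j x.1) μ)
    (hint2 : ∀ i j, Integrable (fun x => φ2 i x.2 * φ2 j x.2) μ)
    (hint12 : ∀ i j, Integrable (fun x => φ1 i x.1 * φ2 j x.2) μ)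
    (η1 : Fin m1 → ℝ) (η2 : Fin m2 → ℝ)
    (hη1 : ∀ i, 0 ≤ η1 i) (hη2 : ∀ i, 0 ≤ η2 i)
    (hη10 : η1 ≠ 0) (hη20 : η2 ≠ 0)
    (K1 K2 : X1 × X2 → X1 × X2 → ℝ)
    (hK1 : ∀ x x', K1 x x' = ∑ i, η1 i * φ1 i x.1 * φ1 i x'.1)
    (hK2 : ∀ x x', K2 x x' = ∑ i, η2 i * φ2 i x.2 * φ2 i x'.2)
    (c : Fin m1 → Fin m2 → ℝ) (hc : ∀ i j, c i j = ∫ x, φ1 i x.1 * φ2 j x.2 ∂μ) :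
    (∫ x, ∫ x', K1 x x' * K2 x x' ∂μ ∂μ) /
        Real.sqrt ((∫ x, ∫ x', (K1 x x') ^ 2 ∂μ ∂μ) * (∫ x, ∫ x', (K2 x x') ^ 2 ∂μ ∂μ))
      = (∑ i, ∑ j, η1 i * η2 j * c i j ^ 2) /
          Real.sqrt ((∑ i, η1 i ^ 2) * (∑ j, η2 j ^ 2)) ∧
    (∫ x, ∫ x', K1 x x' * K2 x x' ∂μ ∂μ) /
        Real.sqrt ((∫ x, ∫ x', (K1 x x') ^ 2 ∂μ ∂μ) * (∫ x, ∫ x', (K2 x x') ^ 2 ∂μ ∂μ))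
      = ∑ i, ∑ j, (η1 i / Real.sqrt (∑ k, η1 k ^ 2)) * (c i j ^ 2)
          * (η2 j / Real.sqrt (∑ k, η2 k ^ 2)) := by
  have e12 : (∫ x, ∫ x', K1 x x' * K2 x x' ∂μ ∂μ)
      = ∑ i, ∑ j, η1 i * η2 j * c i j ^ 2 := by
    have := aux_double_integral μ (fun i (x : X1 × X2) => φ1 i x.1)
      (fun j (x : X1 × X2) => φ2 j x.2) η1 η2 hint12
    simp only [hK1, hK2]
    rw [this]
    exact Finset.sum_congr rfl fun i _ => Finset.sum_congr rfl fun j _ => by rw [hc]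
  have e11 : (∫ x, ∫ x', (K1 x x') ^ 2 ∂μ ∂μ) = ∑ i, η1 i ^ 2 := by
    have := aux_double_integral μ (fun i (x : X1 × X2) => φ1 i x.1)
      (fun j (x : X1 × X2) => φ1 j x.1) η1 η1 hint1
    simp only [hK1, sq]
    rw [this]
    simp only [horth1]
    simp [Finset.mul_sum, mul_ite, mul_one, mul_zero, Finset.sum_ite_eq]
  have e22 : (∫ x, ∫ x', (K2 x x') ^ 2 ∂μ ∂μ) = ∑ i, η2 i ^ 2 := by
    have := aux_double_integral μ (fun i (x : X1 × X2) => φ2 i x.2)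
      (fun j (x : X1 × X2) => φ2 j x.2) η2 η2 hint2
    simp only [hK2, sq]
    rw [this]
    simp only [horth2]
    simp [Finset.mul_sum, mul_ite, mul_one, mul_zero, Finset.sum_ite_eq]
  rw [e12, e11, e22]
  refine ⟨rfl, ?_⟩
  have hS1 : 0 < ∑ k, η1 k ^ 2 := by
    obtain ⟨i, hi⟩ := Function.ne_iff.1 hη10
    exact Finset.sum_pos' (fun k _ => sq_nonneg _)
      ⟨i, Finset.mem_univ i, lt_of_le_of_ne (sq_nonneg _) (Ne.symm (pow_ne_zero 2 hi))⟩
  have hS2 : 0 < ∑ k, η2 k ^ 2 := by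
    obtain ⟨i, hi⟩ := Function.ne_iff.1 hη20
    exact Finset.sum_pos' (fun k _ => sq_nonneg _)
      ⟨i, Finset.mem_univ i, lt_of_le_of_ne (sq_nonneg _) (Ne.symm (pow_ne_zero 2 hi))⟩
  rw [Real.sqrt_mul hS1.le]
  have h1 : Real.sqrt (∑ k, η1 k ^ 2) ≠ 0 := by positivity
  have h2 : Real.sqrt (∑ k, η2 k ^ 2) ≠ 0 := by positivity
  rw [Finset.sum_div]
  refine Finset.sum_congr rfl fun i _ => ?_
  rw [Finset.sum_div]
  refine Finset.sum_congr rfl fun j _ => ?_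
  field_simp
end

section
/- Let (Ω, P) be a probability space with a random variable x in a measurable space X and y ∈ ℝ^t with E‖y‖² < ∞, and let f1 : X → ℝ^{d1}, f2 : X → ℝ^{d2} be measurable with E‖f1(x)‖² < ∞ and E‖f2(x)‖² < ∞. Let g2 : ℝ^{d2} → ℝ^t be κ2-Lipschitz, and suppose R := E‖g2(f2(x)) − y‖² < ∞. For any measurable s : ℝ^{d1} → ℝ^{d2} with e := E‖s(f1(x)) − f2(x)‖² < ∞, the stitched risk satisfies E‖g2(s(f1(x))) − y‖² ≤ R + κ2²·e + 2·κ2·√(e·R). -/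
open MeasureTheory
open scoped BigOperators

/-- Stitching error bound for a `κ2`-Lipschitz output head `g2`:
for any measurable stitcher `s`, with `R = E‖g2(f2(x)) − y‖²` and
`e = E‖s(f1(x)) − f2(x)‖²`, the stitched risk satisfies
`E‖g2(s(f1(x))) − y‖² ≤ R + κ2² e + 2 κ2 √(e R)`. -/
theorem stitched_risk_bound
    {Ω X : Type*} [MeasurableSpace Ω] [MeasurableSpace X]
    (P : Measure Ω) [IsProbabilityMeasure P]
    {t d1 d2 : ℕ} (x : Ω → X) (hx : Measurable x)
    (y : Ω → EuclideanSpace ℝ (Fin t)) (hy : Measurable y)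
    (hy2 : Integrable (fun ω => ‖y ω‖ ^ 2) P)
    (f1 : X → EuclideanSpace ℝ (Fin d1)) (f2 : X → EuclideanSpace ℝ (Fin d2))
    (hf1 : Measurable f1) (hf2 : Measurable f2)
    (hf12 : Integrable (fun ω => ‖f1 (x ω)‖ ^ 2) P)
    (hf22 : Integrable (fun ω => ‖f2 (x ω)‖ ^ 2) P)
    (g2 : EuclideanSpace ℝ (Fin d2) → EuclideanSpace ℝ (Fin t))
    (κ2 : ℝ) (hκ2 : 0 ≤ κ2)
    (hg2 : ∀ z z', ‖g2 z - g2 z'‖ ≤ κ2 * ‖z - z'‖)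
    (R : ℝ) (hR : R = ∫ ω, ‖g2 (f2 (x ω)) - y ω‖ ^ 2 ∂P)
    (hRint : Integrable (fun ω => ‖g2 (f2 (x ω)) - y ω‖ ^ 2) P)
    (s : EuclideanSpace ℝ (Fin d1) → EuclideanSpace ℝ (Fin d2)) (hs : Measurable s)
    (e : ℝ) (he : e = ∫ ω, ‖s (f1 (x ω)) - f2 (x ω)‖ ^ 2 ∂P)
    (heint : Integrable (fun ω => ‖s (f1 (x ω)) - f2 (x ω)‖ ^ 2) P) :
    (∫ ω, ‖g2 (s (f1 (x ω))) - y ω‖ ^ 2 ∂P)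
      ≤ R + κ2 ^ 2 * e + 2 * κ2 * Real.sqrt (e * R) := by
  -- abbreviations
  set B : Ω → ℝ := fun ω => ‖g2 (f2 (x ω)) - y ω‖ with hB
  set D : Ω → ℝ := fun ω => ‖s (f1 (x ω)) - f2 (x ω)‖ with hD
  have hBnn : ∀ ω, 0 ≤ B ω := fun ω => norm_nonneg _
  have hDnn : ∀ ω, 0 ≤ D ω := fun ω => norm_nonneg _
  -- measurability
  have hg2cont : Continuous g2 := by
    have : LipschitzWith (Real.toNNReal κ2) g2 := by
      apply LipschitzWith.of_dist_le_mul
      intro z z'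
      rw [dist_eq_norm, dist_eq_norm, Real.coe_toNNReal _ hκ2]
      exact hg2 z z'
    exact this.continuous
  have hBm : Measurable B := by
    apply Measurable.norm
    exact (hg2cont.measurable.comp (hf2.comp hx)).sub hy
  have hDm : Measurable D := by
    apply Measurable.norm
    exact ((hs.comp (hf1.comp hx)).sub (hf2.comp hx))
  -- Memℒp 2
  have hBL2 : MemLp B 2 P :=
    (memLp_two_iff_integrable_sq hBm.aestronglyMeasurable).2 hRint
  have hDL2 : MemLp D 2 P :=
    (memLp_two_iff_integrable_sq hDm.aestronglyMeasurable).2 heint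
  -- integrability of product
  have hBD : Integrable (fun ω => B ω * D ω) P := by
    have hbd : Integrable (fun ω => B ω ^ 2 + D ω ^ 2) P := by
      exact hRint.add heint
    refine hbd.mono' ((hBm.mul hDm).aestronglyMeasurable) ?_
    filter_upwards with ω
    rw [Real.norm_eq_abs, abs_of_nonneg (mul_nonneg (hBnn ω) (hDnn ω))]
    nlinarith [sq_nonneg (B ω - D ω), mul_nonneg (hBnn ω) (hDnn ω)]
  -- Cauchy-Schwarz
  have hRnn : 0 ≤ R := by
    rw [hR]; exact integral_nonneg fun ω => sq_nonneg _
  have henn : 0 ≤ e := by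
    rw [he]; exact integral_nonneg fun ω => sq_nonneg _
  have hCS : (∫ ω, B ω * D ω ∂P) ≤ Real.sqrt (e * R) := by
    have h2 : (2 : ℝ).HolderConjugate 2 := by
      constructor <;> norm_num
    have := integral_mul_le_Lp_mul_Lq_of_nonneg (μ := P) h2
      (Filter.Eventually.of_forall hBnn) (Filter.Eventually.of_forall hDnn)
      (by simpa using hBL2) (by simpa using hDL2)
    calc (∫ ω, B ω * D ω ∂P)
        ≤ (∫ ω, B ω ^ (2:ℝ) ∂P) ^ ((1:ℝ)/2) * (∫ ω, D ω ^ (2:ℝ) ∂P) ^ ((1:ℝ)/2) := this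
      _ = Real.sqrt R * Real.sqrt e := by
          rw [← Real.sqrt_eq_rpow, ← Real.sqrt_eq_rpow, hR, he]
          norm_num [Real.rpow_two]
          rfl
      _ = Real.sqrt (e * R) := by rw [Real.sqrt_mul henn, mul_comm]
  -- pointwise bound
  have hpt : ∀ ω, ‖g2 (s (f1 (x ω))) - y ω‖ ^ 2
      ≤ B ω ^ 2 + κ2 ^ 2 * D ω ^ 2 + 2 * κ2 * (B ω * D ω) := by
    intro ω
    have htri : ‖g2 (s (f1 (x ω))) - y ω‖ ≤ κ2 * D ω + B ω := by
      calc ‖g2 (s (f1 (x ω))) - y ω‖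
          = ‖(g2 (s (f1 (x ω))) - g2 (f2 (x ω))) + (g2 (f2 (x ω)) - y ω)‖ := by rw [sub_add_sub_cancel]
        _ ≤ ‖g2 (s (f1 (x ω))) - g2 (f2 (x ω))‖ + ‖g2 (f2 (x ω)) - y ω‖ := norm_add_le _ _
        _ ≤ κ2 * D ω + B ω := add_le_add (hg2 _ _) le_rfl
    have h0 : (0:ℝ) ≤ ‖g2 (s (f1 (x ω))) - y ω‖ := norm_nonneg _
    nlinarith [hBnn ω, hDnn ω, mul_nonneg hκ2 (hDnn ω)]
  -- integrate
  have h1i : Integrable (fun ω => B ω ^ 2) P := hRint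
  have h2i : Integrable (fun ω => κ2 ^ 2 * D ω ^ 2) P := heint.const_mul _
  have h3i : Integrable (fun ω => 2 * κ2 * (B ω * D ω)) P := hBD.const_mul _
  have h12i : Integrable (fun ω => B ω ^ 2 + κ2 ^ 2 * D ω ^ 2) P := by exact h1i.add h2i
  have hint : Integrable (fun ω => B ω ^ 2 + κ2 ^ 2 * D ω ^ 2 + 2 * κ2 * (B ω * D ω)) P := by
    exact h12i.add h3i
  have hAm : AEStronglyMeasurable (fun ω => ‖g2 (s (f1 (x ω))) - y ω‖ ^ 2) P := by
    apply Measurable.aestronglyMeasurable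
    exact (((hg2cont.measurable.comp (hs.comp (hf1.comp hx))).sub hy).norm).pow_const 2
  have hAint : Integrable (fun ω => ‖g2 (s (f1 (x ω))) - y ω‖ ^ 2) P := by
    refine hint.mono' hAm ?_
    filter_upwards with ω
    rw [Real.norm_eq_abs, abs_of_nonneg (sq_nonneg _)]
    exact hpt ω
  calc (∫ ω, ‖g2 (s (f1 (x ω))) - y ω‖ ^ 2 ∂P)
      ≤ ∫ ω, B ω ^ 2 + κ2 ^ 2 * D ω ^ 2 + 2 * κ2 * (B ω * D ω) ∂P :=
        integral_mono hAint hint hpt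
    _ = R + κ2 ^ 2 * e + 2 * κ2 * ∫ ω, B ω * D ω ∂P := by
        rw [integral_add h12i h3i, integral_add h1i h2i, integral_const_mul,
          integral_const_mul, hR, he]
    _ ≤ R + κ2 ^ 2 * e + 2 * κ2 * Real.sqrt (e * R) := by
        gcongr
end

section
/- Let (Ω, P) be a probability space with a random variable x in a measurable space X and y ∈ ℝ^t with E‖y‖² < ∞, and let f1 : X → ℝ^{d1}, f2 : X → ℝ^{d2} be measurable with E‖f1(x)‖² < ∞ and E‖f2(x)‖² < ∞. Let g2 : ℝ^{d2} → ℝ^t be κ2-Lipschitz with R := E‖g2(f2(x)) − y‖² < ∞, and define the misalignment Ã2 := inf_{S ∈ ℝ^{d2×d1}} E‖S f1(x) − f2(x)‖². Then the minimal linear stitching risk satisfies R^stitch := inf_{S ∈ ℝ^{d2×d1}} E‖g2(S f1(x)) − y‖² ≤ R + κ2²·Ã2 + 2·κ2·√(Ã2·R). -/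
open MeasureTheory
open scoped BigOperators

lemma l2_cauchy_schwarz {Ω : Type*} [MeasurableSpace Ω] {P : Measure Ω} {p q : Ω → ℝ}
    (hp : AEStronglyMeasurable p P) (hq : AEStronglyMeasurable q P)
    (hpn : ∀ ω, 0 ≤ p ω) (hqn : ∀ ω, 0 ≤ q ω)
    (hp2 : Integrable (fun ω => p ω ^ 2) P) (hq2 : Integrable (fun ω => q ω ^ 2) P) :
    ∫ ω, p ω * q ω ∂P ≤ Real.sqrt (∫ ω, p ω ^ 2 ∂P) * Real.sqrt (∫ ω, q ω ^ 2 ∂P) := by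
  have hpm : MemLp p 2 P := (memLp_two_iff_integrable_sq hp).2 hp2
  have hqm : MemLp q 2 P := (memLp_two_iff_integrable_sq hq).2 hq2
  have h22 : (2 : ℝ).HolderConjugate 2 := Real.HolderConjugate.two_two
  have h := MeasureTheory.integral_mul_le_Lp_mul_Lq_of_nonneg h22
      (Filter.Eventually.of_forall hpn) (Filter.Eventually.of_forall hqn)
      (by simpa using hpm) (by simpa using hqm)
  have hrw : ∀ f : Ω → ℝ, (∫ ω, f ω ^ (2 : ℝ) ∂P) = ∫ ω, f ω ^ 2 ∂P := by
    intro f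
    apply integral_congr_ae
    filter_upwards with ω
    rw [show ((2 : ℝ) = ((2 : ℕ) : ℝ)) by norm_num, Real.rpow_natCast]
  rw [hrw, hrw] at h
  refine h.trans_eq ?_
  rw [Real.sqrt_eq_rpow, Real.sqrt_eq_rpow]

/-- Minimal linear stitching risk bound via misalignment: with a
`κ2`-Lipschitz output head `g2`, `R = E‖g2(f2(x)) − y‖²`, and misalignment
`Ã2 = inf_{S} E‖S f1(x) − f2(x)‖²` over linear stitchers `S ∈ ℝ^{d2×d1}`, the minimal
linear stitching risk satisfies
`inf_S E‖g2(S f1(x)) − y‖² ≤ R + κ2² Ã2 + 2 κ2 √(Ã2 R)`. -/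
theorem minimal_linear_stitching_risk_bound
    {Ω X : Type*} [MeasurableSpace Ω] [MeasurableSpace X]
    (P : Measure Ω) [IsProbabilityMeasure P]
    {t d1 d2 : ℕ} (x : Ω → X) (hx : Measurable x)
    (y : Ω → EuclideanSpace ℝ (Fin t)) (hy : Measurable y)
    (hy2 : Integrable (fun ω => ‖y ω‖ ^ 2) P)
    (f1 : X → EuclideanSpace ℝ (Fin d1)) (f2 : X → EuclideanSpace ℝ (Fin d2))
    (hf1 : Measurable f1) (hf2 : Measurable f2)
    (hf12 : Integrable (fun ω => ‖f1 (x ω)‖ ^ 2) P)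
    (hf22 : Integrable (fun ω => ‖f2 (x ω)‖ ^ 2) P)
    (g2 : EuclideanSpace ℝ (Fin d2) → EuclideanSpace ℝ (Fin t))
    (κ2 : ℝ) (hκ2 : 0 ≤ κ2)
    (hg2 : ∀ z z', ‖g2 z - g2 z'‖ ≤ κ2 * ‖z - z'‖)
    (R : ℝ) (hR : R = ∫ ω, ‖g2 (f2 (x ω)) - y ω‖ ^ 2 ∂P)
    (hRint : Integrable (fun ω => ‖g2 (f2 (x ω)) - y ω‖ ^ 2) P)
    (A2 : ℝ) (hA2 : A2 = ⨅ Sm : Matrix (Fin d2) (Fin d1) ℝ,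
        ∫ ω, ‖Matrix.toEuclideanLin Sm (f1 (x ω)) - f2 (x ω)‖ ^ 2 ∂P) :
    (⨅ Sm : Matrix (Fin d2) (Fin d1) ℝ,
        ∫ ω, ‖g2 (Matrix.toEuclideanLin Sm (f1 (x ω))) - y ω‖ ^ 2 ∂P)
      ≤ R + κ2 ^ 2 * A2 + 2 * κ2 * Real.sqrt (A2 * R) := by
  classical
  -- notation
  set F : Matrix (Fin d2) (Fin d1) ℝ → ℝ :=
    fun Sm => ∫ ω, ‖g2 (Matrix.toEuclideanLin Sm (f1 (x ω))) - y ω‖ ^ 2 ∂P with hF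
  set G : Matrix (Fin d2) (Fin d1) ℝ → ℝ :=
    fun Sm => ∫ ω, ‖Matrix.toEuclideanLin Sm (f1 (x ω)) - f2 (x ω)‖ ^ 2 ∂P with hG
  have hg2c : Continuous g2 := by
    have : LipschitzWith ⟨κ2, hκ2⟩ g2 := by
      apply LipschitzWith.of_dist_le_mul
      intro z z'
      rw [dist_eq_norm, dist_eq_norm]; exact hg2 z z'
    exact this.continuous
  have hRnn : 0 ≤ R := hR ▸ integral_nonneg fun ω => by positivity
  have hGnn : ∀ Sm, 0 ≤ G Sm := fun Sm => integral_nonneg fun ω => by positivity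
  have hFnn : ∀ Sm, 0 ≤ F Sm := fun Sm => integral_nonneg fun ω => by positivity
  have hA2nn : 0 ≤ A2 := hA2 ▸ le_ciInf hGnn
  have hFbdd : BddBelow (Set.range F) := ⟨0, by rintro _ ⟨Sm, rfl⟩; exact hFnn Sm⟩
  have hGbdd : BddBelow (Set.range G) := ⟨0, by rintro _ ⟨Sm, rfl⟩; exact hGnn Sm⟩
  -- key bound for each stitcher Sm
  have key : ∀ Sm, F Sm ≤ R + κ2 ^ 2 * G Sm + 2 * κ2 * Real.sqrt (G Sm * R) := by
    intro Sm
    set u : Ω → EuclideanSpace ℝ (Fin d2) :=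
      fun ω => Matrix.toEuclideanLin Sm (f1 (x ω)) with hu
    have hLc : Continuous fun v => Matrix.toEuclideanLin Sm v :=
      LinearMap.continuous_of_finiteDimensional _
    have hum : Measurable u := hLc.measurable.comp (hf1.comp hx)
    set L : EuclideanSpace ℝ (Fin d1) →L[ℝ] EuclideanSpace ℝ (Fin d2) :=
      LinearMap.toContinuousLinearMap (Matrix.toEuclideanLin Sm) with hL
    have hub : ∀ ω, ‖u ω‖ ≤ ‖L‖ * ‖f1 (x ω)‖ := fun ω => L.le_opNorm _
    -- integrability of ‖u - f2‖²
    have hdiff2 : Integrable (fun ω => ‖u ω - f2 (x ω)‖ ^ 2) P := by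
      refine Integrable.mono' (((hf12.const_mul (2 * ‖L‖ ^ 2)).add
        (hf22.const_mul 2))) ?_ ?_
      · exact ((hum.sub (hf2.comp hx)).norm.pow_const 2).aestronglyMeasurable
      · filter_upwards with ω
        rw [Real.norm_of_nonneg (by positivity)]
        calc ‖u ω - f2 (x ω)‖ ^ 2 ≤ (‖u ω‖ + ‖f2 (x ω)‖) ^ 2 := by
              have := norm_sub_le (u ω) (f2 (x ω))
              exact pow_le_pow_left₀ (norm_nonneg _) this 2
          _ ≤ 2 * ‖u ω‖ ^ 2 + 2 * ‖f2 (x ω)‖ ^ 2 := by nlinarith [sq_nonneg (‖u ω‖ - ‖f2 (x ω)‖)]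
          _ ≤ 2 * (‖L‖ * ‖f1 (x ω)‖) ^ 2 + 2 * ‖f2 (x ω)‖ ^ 2 := by
              have := pow_le_pow_left₀ (norm_nonneg _) (hub ω) 2
              nlinarith
          _ = 2 * ‖L‖ ^ 2 * ‖f1 (x ω)‖ ^ 2 + 2 * ‖f2 (x ω)‖ ^ 2 := by ring
    -- p and q
    set p : Ω → ℝ := fun ω => ‖g2 (u ω) - g2 (f2 (x ω))‖ with hp
    set q : Ω → ℝ := fun ω => ‖g2 (f2 (x ω)) - y ω‖ with hq
    have hpm : Measurable p :=
      ((hg2c.measurable.comp hum).sub (hg2c.measurable.comp (hf2.comp hx))).norm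
    have hqm : Measurable q := ((hg2c.measurable.comp (hf2.comp hx)).sub hy).norm
    have hple : ∀ ω, p ω ^ 2 ≤ κ2 ^ 2 * ‖u ω - f2 (x ω)‖ ^ 2 := by
      intro ω
      have := hg2 (u ω) (f2 (x ω))
      calc p ω ^ 2 ≤ (κ2 * ‖u ω - f2 (x ω)‖) ^ 2 := pow_le_pow_left₀ (norm_nonneg _) this 2
        _ = κ2 ^ 2 * ‖u ω - f2 (x ω)‖ ^ 2 := by ring
    have hp2 : Integrable (fun ω => p ω ^ 2) P := by
      refine Integrable.mono' (hdiff2.const_mul (κ2 ^ 2)) ((hpm.pow_const 2).aestronglyMeasurable) ?_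
      filter_upwards with ω
      rw [Real.norm_of_nonneg (by positivity)]
      exact hple ω
    have hq2 : Integrable (fun ω => q ω ^ 2) P := hRint
    have hpq : Integrable (fun ω => p ω * q ω) P := by
      refine Integrable.mono' ((hp2.add hq2).const_mul (1 / 2)) ((hpm.mul hqm).aestronglyMeasurable) ?_
      filter_upwards with ω
      rw [Real.norm_of_nonneg (by positivity)]
      simp only [Pi.add_apply]
      nlinarith [sq_nonneg (p ω - q ω)]
    -- pointwise triangle bound
    have hpoint : ∀ ω, ‖g2 (u ω) - y ω‖ ^ 2 ≤ p ω ^ 2 + 2 * (p ω * q ω) + q ω ^ 2 := by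
      intro ω
      have htri : ‖g2 (u ω) - y ω‖ ≤ p ω + q ω := by
        have := norm_sub_le_norm_sub_add_norm_sub (g2 (u ω)) (g2 (f2 (x ω))) (y ω)
        simpa [hp, hq] using this
      calc ‖g2 (u ω) - y ω‖ ^ 2 ≤ (p ω + q ω) ^ 2 :=
            pow_le_pow_left₀ (norm_nonneg _) htri 2
        _ = p ω ^ 2 + 2 * (p ω * q ω) + q ω ^ 2 := by ring
    have hFle : F Sm ≤ ∫ ω, (p ω ^ 2 + 2 * (p ω * q ω) + q ω ^ 2) ∂P := by
      refine integral_mono_of_nonneg (Filter.Eventually.of_forall fun ω => by positivity)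
        ((hp2.add (hpq.const_mul 2)).add hq2) (Filter.Eventually.of_forall hpoint)
    have hint1 : Integrable (fun ω => 2 * (p ω * q ω)) P := hpq.const_mul 2
    have hint2 : Integrable (fun ω => p ω ^ 2 + 2 * (p ω * q ω)) P := hp2.add hint1
    have hsplit : ∫ ω, (p ω ^ 2 + 2 * (p ω * q ω) + q ω ^ 2) ∂P
        = (∫ ω, p ω ^ 2 ∂P) + 2 * (∫ ω, p ω * q ω ∂P) + ∫ ω, q ω ^ 2 ∂P := by
      rw [integral_add hint2 hq2, integral_add hp2 hint1, integral_const_mul]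
    have hIp : ∫ ω, p ω ^ 2 ∂P ≤ κ2 ^ 2 * G Sm := by
      rw [hG, ← integral_const_mul]
      exact integral_mono hp2 (hdiff2.const_mul _) hple
    have hIpnn : 0 ≤ ∫ ω, p ω ^ 2 ∂P := integral_nonneg fun ω => by positivity
    have hcs : ∫ ω, p ω * q ω ∂P ≤ Real.sqrt (κ2 ^ 2 * G Sm) * Real.sqrt R := by
      have h1 := l2_cauchy_schwarz hpm.aestronglyMeasurable hqm.aestronglyMeasurable
        (fun ω => norm_nonneg _) (fun ω => norm_nonneg _) hp2 hq2
      refine h1.trans ?_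
      have h2 : Real.sqrt (∫ ω, p ω ^ 2 ∂P) ≤ Real.sqrt (κ2 ^ 2 * G Sm) :=
        Real.sqrt_le_sqrt hIp
      have h3 : Real.sqrt (∫ ω, q ω ^ 2 ∂P) = Real.sqrt R := by rw [hR]
      rw [h3]
      exact mul_le_mul_of_nonneg_right h2 (Real.sqrt_nonneg _)
    have hsqrt : Real.sqrt (κ2 ^ 2 * G Sm) * Real.sqrt R = κ2 * Real.sqrt (G Sm * R) := by
      rw [Real.sqrt_mul (by positivity), Real.sqrt_sq hκ2, Real.sqrt_mul (hGnn Sm), mul_assoc]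
    calc F Sm ≤ (∫ ω, p ω ^ 2 ∂P) + 2 * (∫ ω, p ω * q ω ∂P) + ∫ ω, q ω ^ 2 ∂P := by
          rw [← hsplit]; exact hFle
      _ ≤ κ2 ^ 2 * G Sm + 2 * (κ2 * Real.sqrt (G Sm * R)) + R := by
          have h4 := hcs
          rw [hsqrt] at h4
          have h5 : ∫ ω, q ω ^ 2 ∂P = R := hR.symm
          linarith [hIp]
      _ = R + κ2 ^ 2 * G Sm + 2 * κ2 * Real.sqrt (G Sm * R) := by ring
  -- pass to the infimum via an ε-argument
  have heps : ∀ ε > (0 : ℝ),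
      (⨅ Sm, F Sm) ≤ R + κ2 ^ 2 * (A2 + ε) + 2 * κ2 * Real.sqrt ((A2 + ε) * R) := by
    intro ε hε
    have hlt : (⨅ Sm, G Sm) < A2 + ε := by rw [← hA2]; linarith
    obtain ⟨Sm, hSm⟩ := exists_lt_of_ciInf_lt hlt
    have h1 : (⨅ Sm, F Sm) ≤ F Sm := ciInf_le hFbdd Sm
    have h2 : F Sm ≤ R + κ2 ^ 2 * G Sm + 2 * κ2 * Real.sqrt (G Sm * R) := key Sm
    have h3 : G Sm ≤ A2 + ε := hSm.le
    have h4 : Real.sqrt (G Sm * R) ≤ Real.sqrt ((A2 + ε) * R) :=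
      Real.sqrt_le_sqrt (mul_le_mul_of_nonneg_right h3 hRnn)
    have h5 : κ2 ^ 2 * G Sm ≤ κ2 ^ 2 * (A2 + ε) :=
      mul_le_mul_of_nonneg_left h3 (sq_nonneg κ2)
    have h6 : 2 * κ2 * Real.sqrt (G Sm * R) ≤ 2 * κ2 * Real.sqrt ((A2 + ε) * R) :=
      mul_le_mul_of_nonneg_left h4 (by linarith)
    linarith
  -- take the limit ε → 0⁺
  have hcont : Filter.Tendsto
      (fun ε : ℝ => R + κ2 ^ 2 * (A2 + ε) + 2 * κ2 * Real.sqrt ((A2 + ε) * R))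
      (nhdsWithin 0 (Set.Ioi 0)) (nhds (R + κ2 ^ 2 * (A2 + 0) + 2 * κ2 * Real.sqrt ((A2 + 0) * R))) := by
    have c1 : Continuous fun ε : ℝ => A2 + ε := continuous_const.add continuous_id
    have c2 : Continuous fun ε : ℝ => R + κ2 ^ 2 * (A2 + ε) + 2 * κ2 * Real.sqrt ((A2 + ε) * R) :=
      (continuous_const.add (continuous_const.mul c1)).add
        (continuous_const.mul (Real.continuous_sqrt.comp (c1.mul continuous_const)))
    exact Filter.Tendsto.mono_left (c2.tendsto 0) nhdsWithin_le_nhds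
  have hfinal : (⨅ Sm, F Sm) ≤ R + κ2 ^ 2 * (A2 + 0) + 2 * κ2 * Real.sqrt ((A2 + 0) * R) := by
    refine ge_of_tendsto hcont ?_
    filter_upwards [self_mem_nhdsWithin] with ε hε
    exact heps ε hε
  simpa using hfinal
end

section
/- Let (Ω, P) be a probability space with a random variable x in a measurable space X and y ∈ ℝ^t with E‖y‖² < ∞. Let F1 be a set of measurable maps X → ℝ^{d1} and G1 a set of maps ℝ^{d1} → ℝ^t, and define R(H1) = inf_{g ∈ G1, f ∈ F1} E‖g(f(x)) − y‖². Fix f1 ∈ F1 and fix a κ2-Lipschitz map g2 : ℝ^{d2} → ℝ^t and a measurable f2 : X → ℝ^{d2} with E‖f1(x)‖² < ∞, E‖f2(x)‖² < ∞, and R2 := E‖g2(f2(x)) − y‖² < ∞. Assume that { z ↦ g2(S z) : S ∈ ℝ^{d2×d1} } ⊆ G1, and set Ã2 := inf_{S ∈ ℝ^{d2×d1}} E‖S f1(x) − f2(x)‖². Then R(H1) − R2 ≤ inf_{S ∈ ℝ^{d2×d1}} E‖g2(S f1(x)) − y‖² − R2 ≤ κ2²·Ã2 + 2·κ2·√(Ã2·R2).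 In particular, the difference in risk between the two models is bounded by the misalignment of their representations. -/
open MeasureTheory
open scoped BigOperators

section Aux

variable {Ω : Type*} [MeasurableSpace Ω] {P : Measure Ω}

/-- Core analytic inequality: if `‖U ω‖ ≤ κ * W ω + V ω` pointwise with `W V` nonnegative
L² functions, then `∫ ‖U‖² ≤ κ² ∫W² + 2κ √(∫W²) √(∫V²) + ∫V²`. -/
lemma sq_integral_triangle_bound
    {U : Ω → ℝ} {W V : Ω → ℝ} {κ : ℝ} (hκ : 0 ≤ κ)
    (hUm : AEStronglyMeasurable U P) (hWm : Measurable W) (hVm : Measurable V)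
    (hWnn : ∀ ω, 0 ≤ W ω) (hVnn : ∀ ω, 0 ≤ V ω)
    (hW2 : Integrable (fun ω => W ω ^ 2) P) (hV2 : Integrable (fun ω => V ω ^ 2) P)
    (hpt : ∀ ω, |U ω| ≤ κ * W ω + V ω) :
    ∫ ω, (U ω) ^ 2 ∂P ≤ κ ^ 2 * (∫ ω, W ω ^ 2 ∂P)
      + 2 * κ * (Real.sqrt (∫ ω, W ω ^ 2 ∂P) * Real.sqrt (∫ ω, V ω ^ 2 ∂P))
      + ∫ ω, V ω ^ 2 ∂P := by
  have hbint : Integrable (fun ω => (1/2) * (W ω ^ 2 + V ω ^ 2)) P := by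
    exact (hW2.add hV2).const_mul (1/2)
  have hWVint : Integrable (fun ω => W ω * V ω) P := by
    refine Integrable.mono' hbint ((hWm.mul hVm).aestronglyMeasurable)
      (ae_of_all _ fun ω => ?_)
    rw [Real.norm_of_nonneg (mul_nonneg (hWnn ω) (hVnn ω))]
    nlinarith [sq_nonneg (W ω - V ω)]
  have hi1 : Integrable (fun ω => κ ^ 2 * W ω ^ 2) P := hW2.const_mul _
  have hi2 : Integrable (fun ω => 2 * κ * (W ω * V ω)) P := hWVint.const_mul _
  have hi12 : Integrable (fun ω => κ ^ 2 * W ω ^ 2 + 2 * κ * (W ω * V ω)) P := hi1.add hi2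
  have hRHSint : Integrable (fun ω => κ ^ 2 * W ω ^ 2 + 2 * κ * (W ω * V ω) + V ω ^ 2) P :=
    hi12.add hV2
  have hptsq : ∀ ω, (U ω) ^ 2 ≤ κ ^ 2 * W ω ^ 2 + 2 * κ * (W ω * V ω) + V ω ^ 2 := by
    intro ω
    have h1 : (U ω) ^ 2 ≤ (κ * W ω + V ω) ^ 2 := by
      have := hpt ω
      nlinarith [abs_nonneg (U ω), sq_abs (U ω), neg_abs_le (U ω), le_abs_self (U ω)]
    nlinarith
  have hU2int : Integrable (fun ω => (U ω) ^ 2) P := by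
    refine Integrable.mono' hRHSint (hUm.pow 2) (ae_of_all _ fun ω => ?_)
    rw [Real.norm_of_nonneg (sq_nonneg _)]
    exact hptsq ω
  have h2 : ∫ ω, (U ω) ^ 2 ∂P
      ≤ ∫ ω, (κ ^ 2 * W ω ^ 2 + 2 * κ * (W ω * V ω) + V ω ^ 2) ∂P :=
    integral_mono hU2int hRHSint hptsq
  have h3 : ∫ ω, (κ ^ 2 * W ω ^ 2 + 2 * κ * (W ω * V ω) + V ω ^ 2) ∂P
      = κ ^ 2 * (∫ ω, W ω ^ 2 ∂P) + 2 * κ * (∫ ω, W ω * V ω ∂P) + ∫ ω, V ω ^ 2 ∂P := by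
    rw [integral_add hi12 hV2, integral_add hi1 hi2, integral_const_mul, integral_const_mul]
  -- Cauchy–Schwarz
  have hconj : Real.HolderConjugate 2 2 := Real.HolderConjugate.two_two
  have hWL2 : MemLp W (ENNReal.ofReal 2) P := by
    rw [show ENNReal.ofReal 2 = 2 by norm_num]
    exact (memLp_two_iff_integrable_sq hWm.aestronglyMeasurable).2 hW2
  have hVL2 : MemLp V (ENNReal.ofReal 2) P := by
    rw [show ENNReal.ofReal 2 = 2 by norm_num]
    exact (memLp_two_iff_integrable_sq hVm.aestronglyMeasurable).2 hV2
  have hCS := integral_mul_le_Lp_mul_Lq_of_nonneg hconj (ae_of_all _ hWnn) (ae_of_all _ hVnn)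
    hWL2 hVL2
  have erw2 : (∫ ω, W ω ^ (2 : ℝ) ∂P) = ∫ ω, W ω ^ 2 ∂P := by
    refine integral_congr_ae (ae_of_all _ fun ω => ?_)
    simp [Real.rpow_two]
  have erv2 : (∫ ω, V ω ^ (2 : ℝ) ∂P) = ∫ ω, V ω ^ 2 ∂P := by
    refine integral_congr_ae (ae_of_all _ fun ω => ?_)
    simp [Real.rpow_two]
  rw [erw2, erv2, ← Real.sqrt_eq_rpow, ← Real.sqrt_eq_rpow] at hCS
  have h4 : 2 * κ * (∫ ω, W ω * V ω ∂P)
      ≤ 2 * κ * (Real.sqrt (∫ ω, W ω ^ 2 ∂P) * Real.sqrt (∫ ω, V ω ^ 2 ∂P)) :=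
    mul_le_mul_of_nonneg_left hCS (by positivity)
  linarith

end Aux

/-- Difference in risk is bounded by misalignment: if the
compositions `z ↦ g2(S z)` of the `κ2`-Lipschitz head `g2` with linear stitchers belong
to `G1` and `f1 ∈ F1`, then with `R2 = E‖g2(f2(x)) − y‖²` and
`Ã2 = inf_S E‖S f1(x) − f2(x)‖²` one has
`R(H1) − R2 ≤ inf_S E‖g2(S f1(x)) − y‖² − R2 ≤ κ2² Ã2 + 2 κ2 √(Ã2 R2)`. -/
theorem risk_difference_bounded_by_misalignment
    {Ω X : Type*} [MeasurableSpace Ω] [MeasurableSpace X]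
    (P : Measure Ω) [IsProbabilityMeasure P]
    {t d1 d2 : ℕ} (x : Ω → X) (hx : Measurable x)
    (y : Ω → EuclideanSpace ℝ (Fin t)) (hy : Measurable y)
    (hy2 : Integrable (fun ω => ‖y ω‖ ^ 2) P)
    (F1 : Set (X → EuclideanSpace ℝ (Fin d1)))
    (G1 : Set (EuclideanSpace ℝ (Fin d1) → EuclideanSpace ℝ (Fin t)))
    (f1 : X → EuclideanSpace ℝ (Fin d1)) (hf1 : f1 ∈ F1) (hf1m : Measurable f1)
    (f2 : X → EuclideanSpace ℝ (Fin d2)) (hf2m : Measurable f2)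
    (hf12 : Integrable (fun ω => ‖f1 (x ω)‖ ^ 2) P)
    (hf22 : Integrable (fun ω => ‖f2 (x ω)‖ ^ 2) P)
    (g2 : EuclideanSpace ℝ (Fin d2) → EuclideanSpace ℝ (Fin t))
    (κ2 : ℝ) (hκ2 : 0 ≤ κ2)
    (hg2 : ∀ z z', ‖g2 z - g2 z'‖ ≤ κ2 * ‖z - z'‖)
    (R2 : ℝ) (hR2 : R2 = ∫ ω, ‖g2 (f2 (x ω)) - y ω‖ ^ 2 ∂P)
    (hR2int : Integrable (fun ω => ‖g2 (f2 (x ω)) - y ω‖ ^ 2) P)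
    (hcomp : ∀ Sm : Matrix (Fin d2) (Fin d1) ℝ,
      (fun z => g2 (Matrix.toEuclideanLin Sm z)) ∈ G1)
    (A2 : ℝ) (hA2 : A2 = ⨅ Sm : Matrix (Fin d2) (Fin d1) ℝ,
        ∫ ω, ‖Matrix.toEuclideanLin Sm (f1 (x ω)) - f2 (x ω)‖ ^ 2 ∂P) :
    sInf {r : ℝ | ∃ g ∈ G1, ∃ f ∈ F1, r = ∫ ω, ‖g (f (x ω)) - y ω‖ ^ 2 ∂P} - R2
        ≤ (⨅ Sm : Matrix (Fin d2) (Fin d1) ℝ,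
            ∫ ω, ‖g2 (Matrix.toEuclideanLin Sm (f1 (x ω))) - y ω‖ ^ 2 ∂P) - R2 ∧
    (⨅ Sm : Matrix (Fin d2) (Fin d1) ℝ,
        ∫ ω, ‖g2 (Matrix.toEuclideanLin Sm (f1 (x ω))) - y ω‖ ^ 2 ∂P) - R2
      ≤ κ2 ^ 2 * A2 + 2 * κ2 * Real.sqrt (A2 * R2) := by
  -- notation
  set I : Matrix (Fin d2) (Fin d1) ℝ → ℝ :=
    fun Sm => ∫ ω, ‖g2 (Matrix.toEuclideanLin Sm (f1 (x ω))) - y ω‖ ^ 2 ∂P with hI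
  set a : Matrix (Fin d2) (Fin d1) ℝ → ℝ :=
    fun Sm => ∫ ω, ‖Matrix.toEuclideanLin Sm (f1 (x ω)) - f2 (x ω)‖ ^ 2 ∂P with ha
  have hR2nn : 0 ≤ R2 := hR2 ▸ integral_nonneg fun ω => sq_nonneg _
  have haNN : ∀ Sm, 0 ≤ a Sm := fun Sm => integral_nonneg fun ω => sq_nonneg _
  have hINN : ∀ Sm, 0 ≤ I Sm := fun Sm => integral_nonneg fun ω => sq_nonneg _
  have hIbdd : BddBelow (Set.range I) := ⟨0, by rintro r ⟨Sm, rfl⟩; exact hINN Sm⟩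
  have habdd : BddBelow (Set.range a) := ⟨0, by rintro r ⟨Sm, rfl⟩; exact haNN Sm⟩
  have hA2nn : 0 ≤ A2 := hA2 ▸ le_ciInf haNN
  -- measurability of composed maps
  have hmx1 : Measurable fun ω => f1 (x ω) := hf1m.comp hx
  have hmx2 : Measurable fun ω => f2 (x ω) := hf2m.comp hx
  have hg2c : Continuous g2 := by
    refine LipschitzWith.continuous (K := ⟨κ2, hκ2⟩) (LipschitzWith.of_dist_le_mul fun z z' => ?_)
    rw [dist_eq_norm, dist_eq_norm]
    exact hg2 z z'
  -- key bound for each stitcher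
  have key : ∀ Sm, I Sm ≤ κ2 ^ 2 * a Sm
      + 2 * κ2 * (Real.sqrt (a Sm) * Real.sqrt R2) + R2 := by
    intro Sm
    set L := Matrix.toEuclideanLin Sm with hL
    have hLc : Continuous L := LinearMap.continuous_of_finiteDimensional L
    have hmL : Measurable fun ω => L (f1 (x ω)) := hLc.measurable.comp hmx1
    set C := ‖LinearMap.toContinuousLinearMap L‖ with hC
    have hLb : ∀ z, ‖L z‖ ≤ C * ‖z‖ := fun z =>
      ContinuousLinearMap.le_opNorm (LinearMap.toContinuousLinearMap L) z
    set W : Ω → ℝ := fun ω => ‖L (f1 (x ω)) - f2 (x ω)‖ with hWdef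
    set V : Ω → ℝ := fun ω => ‖g2 (f2 (x ω)) - y ω‖ with hVdef
    have hWm : Measurable W := (hmL.sub hmx2).norm
    have hVm : Measurable V := ((hg2c.measurable.comp hmx2).sub hy).norm
    have hW2 : Integrable (fun ω => W ω ^ 2) P := by
      have hbint : Integrable (fun ω => 2 * C ^ 2 * ‖f1 (x ω)‖ ^ 2 + 2 * ‖f2 (x ω)‖ ^ 2) P := by
        exact (hf12.const_mul (2 * C ^ 2)).add (hf22.const_mul 2)
      refine Integrable.mono' hbint
        ((hWm.pow_const 2).aestronglyMeasurable) (ae_of_all _ fun ω => ?_)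
      rw [Real.norm_of_nonneg (sq_nonneg _)]
      have h1 : W ω ≤ C * ‖f1 (x ω)‖ + ‖f2 (x ω)‖ :=
        (norm_sub_le _ _).trans (add_le_add (hLb _) le_rfl)
      nlinarith [norm_nonneg (L (f1 (x ω)) - f2 (x ω)), norm_nonneg (f1 (x ω)),
        norm_nonneg (f2 (x ω)), sq_nonneg (C * ‖f1 (x ω)‖ - ‖f2 (x ω)‖)]
    have hpt : ∀ ω, |‖g2 (L (f1 (x ω))) - y ω‖| ≤ κ2 * W ω + V ω := by
      intro ω
      rw [abs_of_nonneg (norm_nonneg _)]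
      calc ‖g2 (L (f1 (x ω))) - y ω‖
          = ‖(g2 (L (f1 (x ω))) - g2 (f2 (x ω))) + (g2 (f2 (x ω)) - y ω)‖ := by
            rw [sub_add_sub_cancel]
        _ ≤ ‖g2 (L (f1 (x ω))) - g2 (f2 (x ω))‖ + ‖g2 (f2 (x ω)) - y ω‖ := norm_add_le _ _
        _ ≤ κ2 * W ω + V ω := add_le_add (hg2 _ _) le_rfl
    have hUm : AEStronglyMeasurable (fun ω => ‖g2 (L (f1 (x ω))) - y ω‖) P :=
      ((hg2c.measurable.comp hmL).sub hy).norm.aestronglyMeasurable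
    have hmain := sq_integral_triangle_bound hκ2 hUm hWm hVm
      (fun ω => norm_nonneg _) (fun ω => norm_nonneg _) hW2 hR2int hpt
    simpa [hI, ha, hR2] using hmain
  constructor
  · -- first inequality
    have hbdd : BddBelow {r : ℝ | ∃ g ∈ G1, ∃ f ∈ F1, r = ∫ ω, ‖g (f (x ω)) - y ω‖ ^ 2 ∂P} := by
      refine ⟨0, ?_⟩
      rintro r ⟨g, hg, f, hf, rfl⟩
      exact integral_nonneg fun ω => sq_nonneg _
    refine sub_le_sub_right (le_ciInf fun Sm => csInf_le hbdd ?_) R2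
    exact ⟨_, hcomp Sm, f1, hf1, rfl⟩
  · -- second inequality
    have main : ∀ ε > (0 : ℝ), (⨅ Sm, I Sm) - R2
        ≤ κ2 ^ 2 * (A2 + ε) + 2 * κ2 * Real.sqrt ((A2 + ε) * R2) := by
      intro ε hε
      obtain ⟨Sm, hSm⟩ : ∃ Sm, a Sm < A2 + ε := by
        refine exists_lt_of_ciInf_lt ?_
        rw [← hA2]; linarith
      have h1 : (⨅ Sm, I Sm) ≤ I Sm := ciInf_le hIbdd Sm
      have h2 := key Sm
      have hsq : Real.sqrt (a Sm) * Real.sqrt R2 ≤ Real.sqrt ((A2 + ε) * R2) := by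
        rw [← Real.sqrt_mul (haNN Sm)]
        exact Real.sqrt_le_sqrt (mul_le_mul_of_nonneg_right hSm.le hR2nn)
      have h3 : κ2 ^ 2 * a Sm ≤ κ2 ^ 2 * (A2 + ε) :=
        mul_le_mul_of_nonneg_left hSm.le (sq_nonneg _)
      have h4 : 2 * κ2 * (Real.sqrt (a Sm) * Real.sqrt R2)
          ≤ 2 * κ2 * Real.sqrt ((A2 + ε) * R2) :=
        mul_le_mul_of_nonneg_left hsq (by positivity)
      linarith
    have hcont : Filter.Tendsto (fun ε : ℝ => κ2 ^ 2 * (A2 + ε) + 2 * κ2 * Real.sqrt ((A2 + ε) * R2))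
        (nhdsWithin 0 (Set.Ioi 0)) (nhds (κ2 ^ 2 * A2 + 2 * κ2 * Real.sqrt (A2 * R2))) := by
      have hc : Continuous fun ε : ℝ =>
          κ2 ^ 2 * (A2 + ε) + 2 * κ2 * Real.sqrt ((A2 + ε) * R2) := by
        apply Continuous.add
        · exact continuous_const.mul (continuous_const.add continuous_id)
        · exact continuous_const.mul
            (Real.continuous_sqrt.comp ((continuous_const.add continuous_id).mul continuous_const))
      have := (hc.tendsto 0).mono_left
        (nhdsWithin_le_nhds : nhdsWithin (0 : ℝ) (Set.Ioi 0) ≤ nhds 0)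
      simpa using this
    exact ge_of_tendsto hcont
      (eventually_nhdsWithin_of_forall fun ε hε => main ε hε)
end
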